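/- arXiv:1908.11735 — 10 statements merged into one kernel-verified Lean document; each statement's English description precedes it below -/
import Mathlib

section
/- If a pure product state ⊗_{k=1}^N |ψ^k⟩ of N systems (each with state space H₁) lies in the symmetric subspace of H₁^⊗N (with N ≥ 1), then all factors are equal up to phase: there exists |ψ⟩ such that ⊗_k |ψ^k⟩ = c · |ψ⟩^⊗N for some unit scalar c. -/
open Finset

/-- The product state `⊗ₖ ψs k` of `N` single-particle states, as a function on
multi-indices (the tensor space `H₁^{⊗N}` with `H₁ = ℂ^d`). -/
def tenProd {d N : ℕ} (ψs : Fin N → Fin d → ℂ) : (Fin N → Fin d) → ℂ :=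
  fun f => ∏ k, ψs k (f k)

/-- The `N`-fold tensor power `ψ^{⊗N}`. -/
def tenPow {d N : ℕ} (ψ : Fin d → ℂ) : (Fin N → Fin d) → ℂ :=
  fun f => ∏ k, ψ (f k)

/-- A vector of `H₁^{⊗N}` lies in the symmetric subspace iff it is invariant under
all permutations of the tensor factors. -/
def IsSymmetricVec {d N : ℕ} (v : (Fin N → Fin d) → ℂ) : Prop :=
  ∀ (σ : Equiv.Perm (Fin N)) (f : Fin N → Fin d), v (f ∘ σ) = v f

/-- a pure product state of `N ≥ 1` nonzero factors lying in the
symmetric subspace has all factors equal up to phase: it equals `c • ψ^{⊗N}`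
for some unit scalar `c`. -/
theorem stmt0 {d N : ℕ} (hN : 1 ≤ N) (ψs : Fin N → Fin d → ℂ)
    (hne : ∀ k, ψs k ≠ 0) (hsym : IsSymmetricVec (tenProd ψs)) :
    ∃ (ψ : Fin d → ℂ) (c : ℂ), ‖c‖ = 1 ∧ tenProd ψs = c • tenPow ψ := by
  have hNpos : 0 < N := hN
  have ha : ∀ k, ∃ x, ψs k x ≠ 0 := by
    intro k
    by_contra h
    push_neg at h
    exact hne k (funext fun x => h x)
  choose a ha using ha
  set z : Fin N := ⟨0, hNpos⟩ with hz
  -- key exchange identity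
  have key : ∀ (j : Fin N) (x y : Fin d),
      ψs z x * ψs j y = ψs z y * ψs j x := by
    intro j x y
    by_cases hj : j = z
    · subst hj; ring
    have hzj : z ≠ j := fun h => hj h.symm
    have expand : ∀ u v : Fin d,
        tenProd ψs (fun i => if i = z then u else if i = j then v else a i)
          = (∏ i ∈ univ \ {z, j}, ψs i (a i)) * (ψs z u * ψs j v) := by
      intro u v
      unfold tenProd
      rw [← Finset.prod_sdiff (Finset.subset_univ {z, j})]
      congr 1
      · refine Finset.prod_congr rfl fun i hi => ?_
        simp only [Finset.mem_sdiff, Finset.mem_insert, Finset.mem_singleton] at hi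
        push_neg at hi
        simp [hi.2.1, hi.2.2]
      · rw [Finset.prod_pair hzj]
        simp [hj]
    set f : Fin N → Fin d := fun i => if i = z then x else if i = j then y else a i with hf
    have hcomp : f ∘ Equiv.swap z j
        = fun i => if i = z then y else if i = j then x else a i := by
      funext i
      by_cases h1 : i = z
      · subst h1
        simp [hf, Equiv.swap_apply_left, hj, hzj]
      by_cases h2 : i = j
      · subst h2
        simp [hf, Equiv.swap_apply_right, h1]
      · simp [hf, Equiv.swap_apply_of_ne_of_ne h1 h2, h1, h2]
    have hs := hsym (Equiv.swap z j) f
    rw [hcomp, expand y x] at hs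
    have hfe : tenProd ψs f
        = (∏ i ∈ univ \ {z, j}, ψs i (a i)) * (ψs z x * ψs j y) := expand x y
    rw [hfe] at hs
    have hC : (∏ i ∈ univ \ {z, j}, ψs i (a i)) ≠ 0 :=
      Finset.prod_ne_zero_iff.2 fun i _ => ha i
    exact (mul_left_cancel₀ hC hs).symm
  -- each factor is a multiple of ψs z
  set c0 : Fin N → ℂ := fun j => ψs j (a z) / ψs z (a z) with hc0
  have hmul : ∀ (j : Fin N) (x : Fin d), ψs j x = c0 j * ψs z x := by
    intro j x
    have h := key j x (a z)
    show ψs j x = ψs j (a z) / ψs z (a z) * ψs z x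
    rw [div_mul_eq_mul_div, eq_div_iff (ha z)]
    linear_combination -h
  have hc0ne : ∀ j, c0 j ≠ 0 := by
    intro j hcj
    apply ha j
    rw [hmul j (a j), hcj, zero_mul]
  set C : ℂ := ∏ j, c0 j with hC
  have hCne : C ≠ 0 := Finset.prod_ne_zero_iff.2 fun j _ => hc0ne j
  have hprod : ∀ f, tenProd ψs f = C * tenPow (ψs z) f := by
    intro f
    unfold tenProd tenPow
    rw [hC, ← Finset.prod_mul_distrib]
    exact Finset.prod_congr rfl fun j _ => hmul j (f j)
  -- split C into modulus and phase
  set r : ℝ := ‖C‖ with hr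
  have hrpos : 0 < r := by
    rw [hr]
    exact (norm_pos_iff.mpr hCne)
  set s : ℝ := r ^ ((N : ℝ)⁻¹) with hs
  have hspos : 0 < s := Real.rpow_pos_of_pos hrpos _
  have hsN : (s : ℝ) ^ (N : ℕ) = r := by
    rw [hs, ← Real.rpow_natCast (r ^ ((N : ℝ)⁻¹)) N, ← Real.rpow_mul hrpos.le]
    rw [inv_mul_cancel₀ (by exact_mod_cast hNpos.ne' : (N : ℝ) ≠ 0), Real.rpow_one]
  refine ⟨fun x => (s : ℂ) * ψs z x, C / r, ?_, ?_⟩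
  · rw [norm_div, Complex.norm_real, Real.norm_eq_abs, abs_of_pos hrpos, ← hr, div_self hrpos.ne']
  · funext f
    have hpow : tenPow (fun x => (s : ℂ) * ψs z x) f = (s : ℂ) ^ (N : ℕ) * tenPow (ψs z) f := by
      show (∏ k, (s : ℂ) * ψs z (f k)) = (s : ℂ) ^ (N : ℕ) * ∏ k, ψs z (f k)
      rw [Finset.prod_mul_distrib, Finset.prod_const, Finset.card_fin]
    show tenProd ψs f = (C / r) * tenPow (fun x => (s : ℂ) * ψs z x) f
    rw [hprod f, hpow]
    have : ((s : ℂ)) ^ (N : ℕ) = (r : ℂ) := by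
      rw [← Complex.ofReal_pow, hsN]
    rw [this]
    have hrne : (r : ℂ) ≠ 0 := by exact_mod_cast hrpos.ne'
    field_simp
end

section
/- Let U be a unitary on the symmetric subspace S[H₁^⊗N] such that for every unit vector |ψ⟩ ∈ H₁ there is a unit vector |φ(ψ)⟩ with U|ψ⟩^⊗N = |φ(ψ)⟩^⊗N. Then the map ψ ↦ φ(ψ) preserves inner products: ⟨φ(ψ')|φ(ψ)⟩ = ⟨ψ'|ψ⟩ for all ψ, ψ', assuming φ is continuous. -/
open Finset Matrix

/-- Dot product of tensor powers is the `N`-th power of the dot product. -/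
lemma tenPow_dot {d N : ℕ} (ψ' ψ : Fin d → ℂ) :
    star (tenPow (N := N) ψ') ⬝ᵥ tenPow (N := N) ψ = (star ψ' ⬝ᵥ ψ) ^ N := by
  simp only [dotProduct, Pi.star_apply, tenPow, Fintype.sum_pow]
  refine Finset.sum_congr rfl fun p _ => ?_
  rw [star_prod, ← Finset.prod_mul_distrib]

/-- Unitary matrices preserve the hermitian dot product. -/
lemma unitary_dot {n : Type*} [Fintype n] [DecidableEq n]
    {U : Matrix n n ℂ} (hU : U ∈ Matrix.unitaryGroup n ℂ) (x y : n → ℂ) :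
    star (U.mulVec x) ⬝ᵥ U.mulVec y = star x ⬝ᵥ y := by
  rw [star_mulVec, dotProduct_mulVec, vecMul_vecMul, ← Matrix.star_eq_conjTranspose,
    hU.1, vecMul_one]

/-- If two continuous functions on `[0,1]` have equal `N`-th powers, the second never
vanishes, and they agree at `0`, then they agree at `1`. -/
lemma eq_of_pow_eq_pow {N : ℕ} (hN : 1 ≤ N) {F G : ℝ → ℂ}
    (hF : ContinuousOn F (Set.Icc 0 1)) (hG : ContinuousOn G (Set.Icc 0 1))
    (hGne : ∀ t ∈ Set.Icc (0:ℝ) 1, G t ≠ 0)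
    (hpow : ∀ t ∈ Set.Icc (0:ℝ) 1, F t ^ N = G t ^ N)
    (h0 : F 0 = G 0) : F 1 = G 1 := by
  have h01 : (0:ℝ) ∈ Set.Icc (0:ℝ) 1 := Set.left_mem_Icc.mpr zero_le_one
  have h11 : (1:ℝ) ∈ Set.Icc (0:ℝ) 1 := Set.right_mem_Icc.mpr zero_le_one
  set Z : ℝ → ℂ := fun t => F t / G t with hZdef
  have hZ : ContinuousOn Z (Set.Icc 0 1) := hF.div hG hGne
  have hmaps : Set.MapsTo Z (Set.Icc 0 1) {z : ℂ | z ^ N = 1} := by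
    intro t ht
    simp only [Set.mem_setOf_eq, hZdef, div_pow, hpow t ht]
    exact div_self (pow_ne_zero _ (hGne t ht))
  have hfin : ({z : ℂ | z ^ N = 1} : Set ℂ).Finite := by
    refine Set.Finite.subset (Polynomial.nthRoots N (1:ℂ)).toFinset.finite_toSet ?_
    intro z hz
    simp only [Set.mem_setOf_eq] at hz
    simp only [Finset.coe_sort_coe, Finset.mem_coe, Multiset.mem_toFinset]
    exact (Polynomial.mem_nthRoots (lt_of_lt_of_le one_pos hN)).mpr hz
  haveI := hfin.to_subtype
  haveI : DiscreteTopology ({z : ℂ | z ^ N = 1} : Set ℂ) := inferInstance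
  have hconst : Z 1 = Z 0 :=
    isPreconnected_Icc.constant_of_mapsTo (isDiscrete_iff_discreteTopology.mpr this) hZ hmaps h11 h01
  have hZ0 : Z 0 = 1 := by
    simp only [hZdef, h0]
    exact div_self (hGne 0 h01)
  have : F 1 / G 1 = 1 := by rw [← hZ0]; exact hconst
  exact (div_eq_one_iff_eq (hGne 1 h11)).mp this

/-- unit vector gives dot product 1. -/
lemma dot_self_one {d : ℕ} {x : Fin d → ℂ} (hx : (∑ i, Complex.normSq (x i)) = 1) :
    star x ⬝ᵥ x = 1 := by
  have : star x ⬝ᵥ x = ((∑ i, Complex.normSq (x i) : ℝ) : ℂ) := by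
    simp only [dotProduct, Pi.star_apply, Complex.ofReal_sum]
    refine Finset.sum_congr rfl fun i _ => ?_
    rw [Complex.normSq_eq_conj_mul_self]
    rfl
  rw [this, hx, Complex.ofReal_one]

/-- Key path lemma. -/
lemma key_path {d N : ℕ} (hN : 1 ≤ N)
    (U : Matrix (Fin N → Fin d) (Fin N → Fin d) ℂ)
    (hU : U ∈ Matrix.unitaryGroup (Fin N → Fin d) ℂ)
    (φ : (Fin d → ℂ) → (Fin d → ℂ)) (hφc : Continuous φ)
    (hact : ∀ ψ : Fin d → ℂ, (∑ x, Complex.normSq (ψ x)) = 1 →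
      (∑ x, Complex.normSq (φ ψ x)) = 1 ∧ U.mulVec (tenPow ψ) = tenPow (φ ψ))
    (ψ ψ' : Fin d → ℂ) (hψ : (∑ x, Complex.normSq (ψ x)) = 1)
    (hψ' : (∑ x, Complex.normSq (ψ' x)) = 1)
    (u : ℝ → ℂ) (hu : Continuous u) (hu1 : u 1 = 1)
    (hw : ∀ t ∈ Set.Icc (0:ℝ) 1, (1 - (t:ℂ)) + t * u t * (star ψ' ⬝ᵥ ψ) ≠ 0) :
    star (φ ψ') ⬝ᵥ φ ψ = star ψ' ⬝ᵥ ψ := by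
  have h01 : (0:ℝ) ∈ Set.Icc (0:ℝ) 1 := Set.left_mem_Icc.mpr zero_le_one
  have h11 : (1:ℝ) ∈ Set.Icc (0:ℝ) 1 := Set.right_mem_Icc.mpr zero_le_one
  -- the power identity for arbitrary unit vectors
  have hpow : ∀ x : Fin d → ℂ, (∑ i, Complex.normSq (x i)) = 1 →
      (star (φ ψ') ⬝ᵥ φ x) ^ N = (star ψ' ⬝ᵥ x) ^ N := by
    intro x hx
    rw [← tenPow_dot (φ ψ') (φ x), ← (hact ψ' hψ').2, ← (hact x hx).2,
      unitary_dot hU, tenPow_dot]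
  -- the path
  set v : ℝ → Fin d → ℂ := fun t => (1 - (t:ℂ)) • ψ' + ((t:ℂ) * u t) • ψ with hvdef
  have hdotψ' : star ψ' ⬝ᵥ ψ' = 1 := dot_self_one hψ'
  have hvdot : ∀ t, star ψ' ⬝ᵥ v t = (1 - (t:ℂ)) + t * u t * (star ψ' ⬝ᵥ ψ) := by
    intro t
    simp [hvdef, dotProduct_add, dotProduct_smul, hdotψ', smul_eq_mul]
  have hvne : ∀ t ∈ Set.Icc (0:ℝ) 1, v t ≠ 0 := by
    intro t ht h0
    apply hw t ht
    rw [← hvdot, h0, dotProduct_zero]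
  -- normalization
  set S : ℝ → ℝ := fun t => ∑ i, Complex.normSq (v t i) with hSdef
  have hSpos : ∀ t ∈ Set.Icc (0:ℝ) 1, 0 < S t := by
    intro t ht
    obtain ⟨i, hi⟩ := Function.ne_iff.mp (hvne t ht)
    refine Finset.sum_pos' (fun j _ => Complex.normSq_nonneg _) ⟨i, Finset.mem_univ i, ?_⟩
    exact Complex.normSq_pos.mpr hi
  set n : ℝ → ℝ := fun t => Real.sqrt (S t) with hndef
  have hnpos : ∀ t ∈ Set.Icc (0:ℝ) 1, 0 < n t := fun t ht => Real.sqrt_pos.mpr (hSpos t ht)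
  set c : ℝ → Fin d → ℂ := fun t => ((n t : ℂ))⁻¹ • v t with hcdef
  have hcunit : ∀ t ∈ Set.Icc (0:ℝ) 1, (∑ i, Complex.normSq (c t i)) = 1 := by
    intro t ht
    have hn := hnpos t ht
    have : ∀ i, Complex.normSq (c t i) = (n t)⁻¹ * (n t)⁻¹ * Complex.normSq (v t i) := by
      intro i
      simp only [hcdef, Pi.smul_apply, smul_eq_mul, Complex.normSq_mul, ← Complex.ofReal_inv,
        Complex.normSq_ofReal]
    rw [Finset.sum_congr rfl fun i _ => this i, ← Finset.mul_sum]
    have hsq : n t * n t = ∑ i, Complex.normSq (v t i) := Real.mul_self_sqrt (hSpos t ht).le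
    rw [← hsq]
    have hne := hn.ne'
    field_simp
  -- continuity
  have h1c : Continuous fun t : ℝ => (1 - (t:ℂ)) := continuous_const.sub Complex.continuous_ofReal
  have h2c : Continuous fun t : ℝ => ((t:ℂ) * u t) := Complex.continuous_ofReal.mul hu
  have hvc : Continuous v := (h1c.smul continuous_const).add (h2c.smul continuous_const)
  have hSc : Continuous S := by
    apply continuous_finset_sum
    intro i _
    exact Complex.continuous_normSq.comp ((continuous_apply i).comp hvc)
  have hnc : Continuous n := Real.continuous_sqrt.comp hSc
  have hcc : ContinuousOn c (Set.Icc 0 1) := by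
    apply ContinuousOn.smul (f := fun t => ((n t : ℂ))⁻¹) (g := v)
    · apply ContinuousOn.inv₀
      · exact (Complex.continuous_ofReal.comp hnc).continuousOn
      · intro t ht
        simp only [ne_eq, Complex.ofReal_eq_zero]
        exact (hnpos t ht).ne'
    · exact hvc.continuousOn
  -- endpoints
  have hv0 : v 0 = ψ' := by
    simp [hvdef]
  have hv1 : v 1 = ψ := by
    simp [hvdef, hu1]
  have hc0 : c 0 = ψ' := by
    have : S 0 = 1 := by rw [hSdef]; simp only; rw [hv0, hψ']
    simp [hcdef, hndef, this, hv0]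
  have hc1 : c 1 = ψ := by
    have : S 1 = 1 := by rw [hSdef]; simp only; rw [hv1, hψ]
    simp [hcdef, hndef, this, hv1]
  -- the two functions
  set F : ℝ → ℂ := fun t => star (φ ψ') ⬝ᵥ φ (c t) with hFdef
  set G : ℝ → ℂ := fun t => star ψ' ⬝ᵥ c t with hGdef
  have hdotc : Continuous fun w : Fin d → ℂ => star (φ ψ') ⬝ᵥ φ w := by
    apply continuous_finset_sum
    intro i _
    exact Continuous.mul continuous_const ((continuous_apply i).comp hφc)
  have hdotc2 : Continuous fun w : Fin d → ℂ => star ψ' ⬝ᵥ w := by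
    apply continuous_finset_sum
    intro i _
    exact Continuous.mul continuous_const (continuous_apply i)
  have hFc : ContinuousOn F (Set.Icc 0 1) := hdotc.comp_continuousOn hcc
  have hGc : ContinuousOn G (Set.Icc 0 1) := hdotc2.comp_continuousOn hcc
  have hGne : ∀ t ∈ Set.Icc (0:ℝ) 1, G t ≠ 0 := by
    intro t ht
    have : G t = ((n t : ℂ))⁻¹ * (star ψ' ⬝ᵥ v t) := by
      simp [hGdef, hcdef, dotProduct_smul, smul_eq_mul]
    rw [this, hvdot]
    exact mul_ne_zero (inv_ne_zero (by simpa using (hnpos t ht).ne')) (hw t ht)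
  have hFG : ∀ t ∈ Set.Icc (0:ℝ) 1, F t ^ N = G t ^ N := fun t ht =>
    hpow (c t) (hcunit t ht)
  have h0 : F 0 = G 0 := by
    rw [hFdef, hGdef]
    simp only [hc0]
    rw [dot_self_one (hact ψ' hψ').1, hdotψ']
  have h1 : F 1 = G 1 := eq_of_pow_eq_pow hN hFc hGc hGne hFG h0
  rw [hFdef, hGdef] at h1
  simpa [hc1] using h1

/-- if a unitary `U` maps every tensor power `ψ^{⊗N}` of a unit vector to a
tensor power `(φ ψ)^{⊗N}` of a unit vector, and `φ` is continuous, then `φ` preserves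
inner products on unit vectors. -/
theorem stmt2 {d N : ℕ} (hN : 1 ≤ N)
    (U : Matrix (Fin N → Fin d) (Fin N → Fin d) ℂ)
    (hU : U ∈ Matrix.unitaryGroup (Fin N → Fin d) ℂ)
    (φ : (Fin d → ℂ) → (Fin d → ℂ)) (hφc : Continuous φ)
    (hact : ∀ ψ : Fin d → ℂ, (∑ x, Complex.normSq (ψ x)) = 1 →
      (∑ x, Complex.normSq (φ ψ x)) = 1 ∧ U.mulVec (tenPow ψ) = tenPow (φ ψ)) :
    ∀ ψ ψ' : Fin d → ℂ, (∑ x, Complex.normSq (ψ x)) = 1 →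
      (∑ x, Complex.normSq (ψ' x)) = 1 →
      star (φ ψ') ⬝ᵥ φ ψ = star ψ' ⬝ᵥ ψ := by
  intro ψ ψ' hψ hψ'
  set a : ℂ := star ψ' ⬝ᵥ ψ with hadef
  by_cases ha : a = 0
  · -- zero case
    have hpow : (star (φ ψ') ⬝ᵥ φ ψ) ^ N = a ^ N := by
      rw [← tenPow_dot (φ ψ') (φ ψ), ← (hact ψ' hψ').2, ← (hact ψ hψ).2,
        unitary_dot hU, tenPow_dot]
    rw [ha] at hpow ⊢
    rw [zero_pow (by omega)] at hpow
    exact pow_eq_zero_iff (by omega) |>.mp hpow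
  · by_cases him : a.im = 0
    · -- a is a nonzero real: use the twisted path u t = (1-t)I + t
      have hre : a.re ≠ 0 := by
        intro h
        exact ha (Complex.ext h him)
      apply key_path hN U hU φ hφc hact ψ ψ' hψ hψ'
        (fun t => (1 - (t:ℂ)) * Complex.I + t)
      · continuity
      · simp
      · intro t ht
        rcases eq_or_lt_of_le ht.1 with h0 | h0
        · simp [← h0]
        rcases eq_or_lt_of_le ht.2 with h1 | h1
        · simp only [h1]
          intro hcon
          apply ha
          simpa using hcon
        · -- 0 < t < 1 : the imaginary part is t(1-t)a.re ≠ 0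
          intro hcon
          have him' : ((1 - (t:ℂ)) + t * ((1 - (t:ℂ)) * Complex.I + t) * a).im
              = t * (1 - t) * a.re := by
            have : (a : ℂ) = (a.re : ℂ) := by
              rw [Complex.ext_iff]; simp [him]
            rw [this]
            simp [Complex.add_im, Complex.mul_im, Complex.mul_re]
            try ring
          rw [hcon] at him'
          simp only [Complex.zero_im] at him'
          have : t * (1 - t) * a.re ≠ 0 := by
            apply mul_ne_zero (mul_ne_zero h0.ne' (by linarith)) hre
          exact this him'.symm
    · -- a has nonzero imaginary part: straight-ish path u t = t
      apply key_path hN U hU φ hφc hact ψ ψ' hψ hψ' (fun t => (t:ℂ))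
      · continuity
      · simp
      · intro t ht
        rcases eq_or_lt_of_le ht.1 with h0 | h0
        · simp [← h0]
        · intro hcon
          have him' : ((1 - (t:ℂ)) + t * t * a).im = t * t * a.im := by
            simp [Complex.add_im, Complex.mul_im, Complex.mul_re]
          rw [hcon] at him'
          simp only [Complex.zero_im] at him'
          exact him (by
            have ht2 : t * t ≠ 0 := mul_ne_zero h0.ne' h0.ne'
            field_simp at him'
            exact (mul_eq_zero.mp him'.symm).resolve_left (pow_ne_zero 2 h0.ne'))
end

section
/- Let N > 1 and let {Π_i}_{i=1}^k be nonzero mutually orthogonal projectors on H₁^⊗N, each of the form Π_i = P_N π_i^⊗N P_N for projectors π_i on H₁ with π_i π_j = δ_{ij} π_i, satisfying Σ_{i=1}^k Π_i = P_N. Then k = 1 and Π_1 = P_N. -/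
open Finset
open Matrix

/-- The `N`-fold tensor power `π^{⊗N}` of a single-particle operator. -/
def matPow {d N : ℕ} (π : Matrix (Fin d) (Fin d) ℂ) :
    Matrix (Fin N → Fin d) (Fin N → Fin d) ℂ :=
  fun f g => ∏ k, π (f k) (g k)

/-- The orthogonal projector `P_N` of `H₁^{⊗N}` onto the symmetric subspace. -/
noncomputable def symmetrizer (d N : ℕ) : Matrix (Fin N → Fin d) (Fin N → Fin d) ℂ :=
  fun f g => ((N.factorial : ℂ))⁻¹ * ∑ σ : Equiv.Perm (Fin N), if g = f ∘ σ then 1 else 0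

def tpow {d N : ℕ} (v : Fin d → ℂ) : (Fin N → Fin d) → ℂ := fun f => ∏ k, v (f k)

lemma symmetrizer_mulVec_tpow {d N : ℕ} (v : Fin d → ℂ) :
    (symmetrizer d N).mulVec (tpow v) = tpow v := by
  funext f
  simp only [Matrix.mulVec, symmetrizer, dotProduct, tpow, mul_assoc,
    ← Finset.mul_sum, Finset.sum_mul, ite_mul, one_mul, zero_mul]
  rw [Finset.sum_comm]
  simp only [Finset.sum_ite_eq', Finset.mem_univ, if_true, Function.comp]
  have : ∀ σ : Equiv.Perm (Fin N), ∏ k, v (f (σ k)) = ∏ k, v (f k) := fun σ =>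
    Equiv.prod_comp σ (fun k => v (f k))
  rw [Finset.sum_congr rfl (fun σ _ => this σ), Finset.sum_const, Finset.card_univ,
    Fintype.card_perm, Fintype.card_fin, nsmul_eq_mul, ← mul_assoc,
    inv_mul_cancel₀ (by exact_mod_cast (Nat.factorial_pos N).ne'), one_mul]

lemma matPow_mulVec_tpow {d N : ℕ} (π : Matrix (Fin d) (Fin d) ℂ) (v : Fin d → ℂ) :
    (matPow (N := N) π).mulVec (tpow v) = tpow (π.mulVec v) := by
  funext f
  simp only [Matrix.mulVec, matPow, dotProduct, tpow, ← Finset.prod_mul_distrib]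
  rw [Finset.prod_univ_sum, Fintype.piFinset_univ]

lemma tpow_dot {d N : ℕ} (u v : Fin d → ℂ) :
    tpow (N := N) u ⬝ᵥ tpow v = (u ⬝ᵥ v) ^ N := by
  simp only [dotProduct, tpow, ← Finset.prod_mul_distrib]
  rw [show (∑ i : Fin d, u i * v i) ^ N = ∏ _k : Fin N, ∑ i : Fin d, u i * v i by
        simp [Finset.prod_const, Finset.card_univ],
    Finset.prod_univ_sum, Fintype.piFinset_univ]

lemma star_tpow {d N : ℕ} (v : Fin d → ℂ) :
    star (tpow (N := N) v) = tpow (star v) := by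
  funext f
  simp [tpow]

lemma sum_dotProduct' {ι n : Type*} [Fintype ι] [Fintype n] (u : ι → n → ℂ) (x : n → ℂ) :
    (∑ i, u i) ⬝ᵥ x = ∑ i, u i ⬝ᵥ x := by
  simp only [dotProduct, Finset.sum_apply, Finset.sum_mul]
  rw [Finset.sum_comm]

lemma dotProduct_sum' {ι n : Type*} [Fintype ι] [Fintype n] (x : n → ℂ) (u : ι → n → ℂ) :
    x ⬝ᵥ (∑ i, u i) = ∑ i, x ⬝ᵥ u i := by
  simp only [dotProduct, Finset.sum_apply, Finset.mul_sum]
  rw [Finset.sum_comm]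

lemma sum_mulVec' {ι m n : Type*} [Fintype ι] [Fintype n]
    (A : ι → Matrix m n ℂ) (x : n → ℂ) :
    (∑ i, A i).mulVec x = ∑ i, (A i).mulVec x := by
  funext j
  simp only [Matrix.mulVec, dotProduct, Finset.sum_apply, Matrix.sum_apply,
    Finset.sum_mul]
  rw [Finset.sum_comm]

lemma sum_pow_lt {k N : ℕ} (hN : 1 < N) (hk : 2 ≤ k) (r : Fin k → ℝ) (hr : ∀ i, 0 < r i) :
    ∑ i, r i ^ N < (∑ i, r i) ^ N := by
  set s := ∑ i, r i with hs
  have hle : ∀ i, r i ≤ s := fun i =>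
    Finset.single_le_sum (fun j _ => (hr j).le) (Finset.mem_univ i)
  have i0 : Fin k := ⟨0, by omega⟩
  have i1 : Fin k := ⟨1, by omega⟩
  have h01 : (⟨0, by omega⟩ : Fin k) ≠ ⟨1, by omega⟩ := by simp [Fin.ext_iff]
  have hpair : r ⟨0, by omega⟩ + r ⟨1, by omega⟩ ≤ s := by
    rw [hs, ← Finset.sum_pair h01]
    exact Finset.sum_le_sum_of_subset_of_nonneg (Finset.subset_univ _)
      (fun j _ _ => (hr j).le)
  have hlt0 : r (⟨0, by omega⟩ : Fin k) < s :=
    lt_of_lt_of_le (lt_add_of_pos_right _ (hr _)) hpair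
  have key : ∀ i ∈ Finset.univ, r i ^ N ≤ r i * s ^ (N - 1) := by
    intro i _
    calc r i ^ N = r i * r i ^ (N - 1) := by
          rw [← pow_succ']; congr 1; omega
      _ ≤ r i * s ^ (N - 1) :=
          mul_le_mul_of_nonneg_left (pow_le_pow_left₀ (hr i).le (hle i) _) (hr i).le
  have strict : r (⟨0, by omega⟩ : Fin k) ^ N < r ⟨0, by omega⟩ * s ^ (N - 1) := by
    calc r (⟨0, by omega⟩ : Fin k) ^ N = r ⟨0, by omega⟩ * r ⟨0, by omega⟩ ^ (N - 1) := by
          rw [← pow_succ']; congr 1; omega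
      _ < r ⟨0, by omega⟩ * s ^ (N - 1) := by
          apply mul_lt_mul_of_pos_left _ (hr _)
          exact pow_lt_pow_left₀ hlt0 (hr _).le (by omega)
  calc ∑ i, r i ^ N < ∑ i, r i * s ^ (N - 1) :=
        Finset.sum_lt_sum key ⟨⟨0, by omega⟩, Finset.mem_univ _, strict⟩
    _ = s * s ^ (N - 1) := by rw [← Finset.sum_mul]
    _ = s ^ N := by rw [← pow_succ']; congr 1; omega

/-- for `N > 1`, a complete family of nonzero mutually orthogonal
projectors of the form `Π_i = P_N π_i^{⊗N} P_N` summing to `P_N` must consist of a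
single projector, equal to `P_N` itself. -/
theorem stmt4 {d N k : ℕ} (hN : 1 < N) (hk : 0 < k)
    (π : Fin k → Matrix (Fin d) (Fin d) ℂ)
    (hherm : ∀ i, (π i).IsHermitian)
    (horth : ∀ i j, π i * π j = if i = j then π i else 0)
    (Pi_ : Fin k → Matrix (Fin N → Fin d) (Fin N → Fin d) ℂ)
    (hdef : ∀ i, Pi_ i = symmetrizer d N * matPow (π i) * symmetrizer d N)
    (hnz : ∀ i, Pi_ i ≠ 0)
    (hcomplete : ∑ i, Pi_ i = symmetrizer d N) :
    k = 1 ∧ Pi_ ⟨0, hk⟩ = symmetrizer d N := by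
  have hk1 : k = 1 := by
    by_contra hne
    have hk2 : 2 ≤ k := by omega
    -- each π i has a nonzero entry
    have hπne : ∀ i, ∃ a c, π i a c ≠ 0 := by
      intro i
      by_contra h
      push_neg at h
      apply hnz i
      rw [hdef i]
      have hz : matPow (N := N) (π i) = 0 := by
        funext f g
        have : ∀ x : Fin N, π i (f x) (g x) = 0 := fun x => h _ _
        simp only [matPow, Matrix.zero_apply]
        rw [Finset.prod_congr rfl (fun x _ => this x), Finset.prod_const,
          Finset.card_univ, Fintype.card_fin]
        exact zero_pow (by omega)
      rw [hz, Matrix.mul_zero, Matrix.zero_mul]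
    choose a b hab using hπne
    set w : Fin k → Fin d → ℂ := fun i c => π i c (b i) with hw
    -- π j applied to w i
    have hPw : ∀ i j, (π j).mulVec (w i) = if j = i then w i else 0 := by
      intro i j
      funext c
      have : (π j).mulVec (w i) c = (π j * π i) c (b i) := by
        simp [Matrix.mulVec, dotProduct, Matrix.mul_apply, hw]
      rw [this, horth j i]
      by_cases hij : j = i <;> simp [hij, hw]
    -- real weights
    set r : Fin k → ℝ := fun i => ∑ c, Complex.normSq (w i c) with hr
    have hrpos : ∀ i, 0 < r i := by
      intro i
      apply Finset.sum_pos' (fun c _ => Complex.normSq_nonneg _)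
      exact ⟨a i, Finset.mem_univ _, Complex.normSq_pos.mpr (hab i)⟩
    -- inner products
    have hdot : ∀ i j, star (w i) ⬝ᵥ w j = if i = j then ((r i : ℝ) : ℂ) else 0 := by
      intro i j
      by_cases hij : i = j
      · subst hij
        simp only [if_pos rfl, dotProduct, Pi.star_apply, hr]
        push_cast
        refine Finset.sum_congr rfl fun c _ => ?_
        rw [show star (w i c) = (starRingEnd ℂ) (w i c) from rfl,
          ← Complex.normSq_eq_conj_mul_self]
      · rw [if_neg hij]
        have h1 : w j = (π j).mulVec (w j) := by rw [hPw j j, if_pos rfl]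
        rw [h1, dotProduct_mulVec]
        have h2 : star (w i) ᵥ* π j = 0 := by
          have := Matrix.star_mulVec (M := π j) (v := w i)
          rw [(hherm j).eq] at this
          rw [← this, hPw i j, if_neg (Ne.symm hij), star_zero]
        rw [h2, zero_dotProduct]
    -- the test vector
    set v : Fin d → ℂ := ∑ i, w i with hv
    have hmv : ∀ (A : Matrix (Fin d) (Fin d) ℂ), A.mulVec v = ∑ i, A.mulVec (w i) := by
      intro A
      rw [hv, ← Matrix.mulVecLin_apply, map_sum]
      simp [Matrix.mulVecLin_apply]
    have hπv : ∀ j, (π j).mulVec v = w j := by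
      intro j
      rw [hmv, Finset.sum_congr rfl (fun i _ => hPw i j), Finset.sum_ite_eq]
      simp
    have hsv : star v = ∑ i, star (w i) := by rw [hv]; exact star_sum _ _
    have hvw : ∀ j, star v ⬝ᵥ w j = ((r j : ℝ) : ℂ) := by
      intro j
      rw [hsv, sum_dotProduct', Finset.sum_congr rfl (fun i _ => hdot i j),
        Finset.sum_ite_eq']
      simp
    have hvv : star v ⬝ᵥ v = (((∑ i, r i : ℝ)) : ℂ) := by
      rw [hv, dotProduct_sum', Finset.sum_congr rfl (fun j _ => hvw j)]
      push_cast
      rfl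
    -- evaluate completeness on tpow v
    have key := congrArg (fun M : Matrix (Fin N → Fin d) (Fin N → Fin d) ℂ =>
      star (tpow (N := N) v) ⬝ᵥ M.mulVec (tpow v)) hcomplete
    rw [symmetrizer_mulVec_tpow, star_tpow, tpow_dot, hvv] at key
    have hterm : ∀ i, (Pi_ i).mulVec (tpow (N := N) v) = tpow (w i) := by
      intro i
      rw [hdef i, ← Matrix.mulVec_mulVec, ← Matrix.mulVec_mulVec,
        symmetrizer_mulVec_tpow, matPow_mulVec_tpow, hπv, symmetrizer_mulVec_tpow]
    rw [sum_mulVec', Finset.sum_congr rfl (fun i _ => hterm i)] at key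
    rw [dotProduct_sum',
      Finset.sum_congr rfl (fun i _ => by rw [tpow_dot, hvw i])] at key
    -- transfer to ℝ and contradict
    have keyR : ∑ i, r i ^ N = (∑ i, r i) ^ N := by
      have : ((∑ i, r i ^ N : ℝ) : ℂ) = (((∑ i, r i) ^ N : ℝ) : ℂ) := by
        push_cast
        rw [key]
        push_cast
        ring
      exact_mod_cast this
    exact absurd keyR (ne_of_lt (sum_pow_lt hN hk2 r hrpos))
  subst hk1
  refine ⟨rfl, ?_⟩
  rw [← hcomplete, Fin.sum_univ_one]
  congr
end

section
/- Suppose a distance D on quantum states satisfies contractivity under channels, joint convexity, and direct-sum concavity D(⊕_i p_i ρ_i, ⊕_i q_i σ_i) ≥ Σ_i p_i D(ρ_i, σ_i). Then D is direct-sum linear: D(⊕_i p_i ρ_i, ⊕_i p_i σ_i) = Σ_i p_i D(ρ_i, σ_i). -/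
open Finset ComplexOrder Matrix

/-- A density operator: positive semidefinite with unit trace. -/
def IsDensity {n : Type} [Fintype n] (ρ : Matrix n n ℂ) : Prop :=
  ρ.PosSemidef ∧ ρ.trace = 1

/-- A quantum channel: completely positive trace-preserving map, presented by a
(finite) Kraus decomposition. -/
def IsCPTP {n m : Type} [Fintype n] [Fintype m] [DecidableEq n]
    (E : Matrix n n ℂ → Matrix m m ℂ) : Prop :=
  ∃ (r : ℕ) (K : Fin r → Matrix m n ℂ),
    (∀ ρ, E ρ = ∑ i, K i * ρ * (K i)ᴴ) ∧ (∑ i, (K i)ᴴ * K i = 1)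

/-- The block-diagonal (classically flagged) state `⊕ᵢ pᵢ ρᵢ = Σᵢ pᵢ ρᵢ ⊗ |i⟩⟨i|`. -/
def blockDiag {n : Type} [Fintype n] {m : ℕ}
    (p : Fin m → ℝ) (ρ : Fin m → Matrix n n ℂ) : Matrix (n × Fin m) (n × Fin m) ℂ :=
  fun a b => if a.2 = b.2 then (p a.2 : ℂ) * ρ a.2 a.1 b.1 else 0

def embed {n : Type} [Fintype n] {r : ℕ} (i : Fin r) (X : Matrix n n ℂ) :
    Matrix (n × Fin r) (n × Fin r) ℂ :=
  fun a b => if a.2 = i ∧ b.2 = i then X a.1 b.1 else 0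

def Kemb (n : Type) [DecidableEq n] {r : ℕ} (i : Fin r) : Matrix (n × Fin r) n ℂ :=
  fun a b => if a.2 = i ∧ a.1 = b then 1 else 0

lemma Kemb_mul {n : Type} [Fintype n] [DecidableEq n] {r : ℕ} (i : Fin r)
    (X : Matrix n n ℂ) : Kemb n i * X * (Kemb n i)ᴴ = embed i X := by
  ext a b
  simp [Matrix.mul_apply, Kemb, embed, conjTranspose_apply, apply_ite, Finset.sum_ite_eq,
    ite_and, Finset.mul_sum]
  by_cases h1 : a.2 = i <;> by_cases h2 : b.2 = i <;> simp [h1, h2]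

lemma Kemb_tp {n : Type} [Fintype n] [DecidableEq n] {r : ℕ} (i : Fin r) :
    (Kemb n i)ᴴ * Kemb n i = 1 := by
  ext a b
  simp [Matrix.mul_apply, Kemb, conjTranspose_apply, apply_ite, ite_and, Matrix.one_apply]
  rw [Finset.sum_eq_single (a, i)] <;> aesop

lemma embed_cptp {n : Type} [Fintype n] [DecidableEq n] {r : ℕ} (i : Fin r) :
    IsCPTP (embed (n := n) i) := by
  exact ⟨1, fun _ => Kemb n i, fun ρ => by simp [Kemb_mul], by simp [Kemb_tp]⟩

lemma embed_density {n : Type} [Fintype n] [DecidableEq n] {r : ℕ} (i : Fin r)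
    {X : Matrix n n ℂ} (hX : IsDensity X) : IsDensity (embed i X) := by
  constructor
  · rw [← Kemb_mul]
    exact hX.1.mul_mul_conjTranspose_same _
  · rw [Matrix.trace, ← hX.2, Matrix.trace]
    rw [Fintype.sum_prod_type]
    simp [embed, Matrix.diag, Finset.sum_ite_eq]

lemma blockDiag_eq_sum {n : Type} [Fintype n] [DecidableEq n] {r : ℕ}
    (p : Fin r → ℝ) (ρ : Fin r → Matrix n n ℂ) :
    blockDiag p ρ = ∑ i, (p i : ℂ) • embed i (ρ i) := by
  ext ⟨a, i⟩ ⟨b, j⟩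
  simp only [_root_.blockDiag, Matrix.sum_apply, Matrix.smul_apply, embed, smul_ite, smul_zero,
    smul_eq_mul]
  by_cases h : i = j
  · subst h
    rw [Finset.sum_eq_single i] <;> aesop
  · rw [Finset.sum_eq_zero] <;> aesop

/-- a distance on states which is contractive under channels, jointly
convex, and direct-sum concave is direct-sum linear. -/
theorem stmt5
    (D : ∀ (n : Type) [Fintype n] [DecidableEq n], Matrix n n ℂ → Matrix n n ℂ → ℝ)
    (hcontr : ∀ (n m : Type) [Fintype n] [DecidableEq n] [Fintype m] [DecidableEq m]
      (E : Matrix n n ℂ → Matrix m m ℂ), IsCPTP E →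
      ∀ ρ σ : Matrix n n ℂ, IsDensity ρ → IsDensity σ → D m (E ρ) (E σ) ≤ D n ρ σ)
    (hconv : ∀ (n : Type) [Fintype n] [DecidableEq n] (r : ℕ) (p : Fin r → ℝ),
      (∀ i, 0 ≤ p i) → (∑ i, p i = 1) →
      ∀ (ρ σ : Fin r → Matrix n n ℂ), (∀ i, IsDensity (ρ i)) → (∀ i, IsDensity (σ i)) →
      D n (∑ i, (p i : ℂ) • ρ i) (∑ i, (p i : ℂ) • σ i) ≤ ∑ i, p i * D n (ρ i) (σ i))
    (hconc : ∀ (n : Type) [Fintype n] [DecidableEq n] (r : ℕ) (p q : Fin r → ℝ),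
      (∀ i, 0 ≤ p i) → (∑ i, p i = 1) → (∀ i, 0 ≤ q i) → (∑ i, q i = 1) →
      ∀ (ρ σ : Fin r → Matrix n n ℂ), (∀ i, IsDensity (ρ i)) → (∀ i, IsDensity (σ i)) →
      ∑ i, p i * D n (ρ i) (σ i) ≤ D (n × Fin r) (blockDiag p ρ) (blockDiag q σ)) :
    ∀ (n : Type) [Fintype n] [DecidableEq n] (r : ℕ) (p : Fin r → ℝ),
      (∀ i, 0 ≤ p i) → (∑ i, p i = 1) →
      ∀ (ρ σ : Fin r → Matrix n n ℂ), (∀ i, IsDensity (ρ i)) → (∀ i, IsDensity (σ i)) →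
      D (n × Fin r) (blockDiag p ρ) (blockDiag p σ) = ∑ i, p i * D n (ρ i) (σ i) := by
  intro n _ _ r p hp hp1 ρ σ hρ hσ
  apply le_antisymm
  · calc D (n × Fin r) (blockDiag p ρ) (blockDiag p σ)
        = D _ (∑ i, (p i : ℂ) • embed i (ρ i)) (∑ i, (p i : ℂ) • embed i (σ i)) := by
          rw [blockDiag_eq_sum, blockDiag_eq_sum]
      _ ≤ ∑ i, p i * D _ (embed i (ρ i)) (embed i (σ i)) :=
          hconv _ r p hp hp1 _ _ (fun i => embed_density i (hρ i))
            (fun i => embed_density i (hσ i))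
      _ ≤ ∑ i, p i * D n (ρ i) (σ i) := by
          apply Finset.sum_le_sum
          intro i _
          exact mul_le_mul_of_nonneg_left
            (hcontr n _ _ (embed_cptp i) _ _ (hρ i) (hσ i)) (hp i)
  · exact hconc n r p p hp hp1 hp hp1 ρ σ hρ hσ
end

section
/- Under the same three hypotheses on D (contractivity, joint convexity, direct-sum concavity), D is ensemble-contractive: for any quantum instrument {E_i} with E_i(ρ) = p_i ρ_i and E_i(σ) = q_i σ_i, one has Σ_i p_i D(ρ_i, σ_i) ≤ D(ρ, σ). -/
open Finset ComplexOrder Matrix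

/-- A completely positive map, presented by a (finite) Kraus decomposition. -/
def IsCP {n m : Type} [Fintype n] [Fintype m]
    (E : Matrix n n ℂ → Matrix m m ℂ) : Prop :=
  ∃ (r : ℕ) (K : Fin r → Matrix m n ℂ), ∀ ρ, E ρ = ∑ i, K i * ρ * (K i)ᴴ

private lemma eq_one_of_trace_mul {n : Type} [Fintype n] [DecidableEq n]
    (A : Matrix n n ℂ) (h : ∀ X : Matrix n n ℂ, (A * X).trace = X.trace) : A = 1 := by
  ext c d
  have h1 := h (Matrix.single d c 1)
  simp only [Matrix.trace, Matrix.diag, Matrix.mul_apply, Matrix.single,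
    Matrix.one_apply, ite_and, mul_ite, mul_one, mul_zero, Finset.sum_ite_eq,
    Finset.sum_ite_eq', Finset.mem_univ, if_true, Matrix.of_apply] at h1 ⊢
  exact h1


/-- a distance on states which is contractive under channels, jointly
convex, and direct-sum concave is ensemble contractive: for any quantum instrument
`{Eᵢ}` with `Eᵢ(ρ) = pᵢ ρᵢ` and `Eᵢ(σ) = qᵢ σᵢ`, `Σᵢ pᵢ D(ρᵢ,σᵢ) ≤ D(ρ,σ)`. -/
theorem stmt6
    (D : ∀ (n : Type) [Fintype n] [DecidableEq n], Matrix n n ℂ → Matrix n n ℂ → ℝ)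
    (hcontr : ∀ (n m : Type) [Fintype n] [DecidableEq n] [Fintype m] [DecidableEq m]
      (E : Matrix n n ℂ → Matrix m m ℂ), IsCPTP E →
      ∀ ρ σ : Matrix n n ℂ, IsDensity ρ → IsDensity σ → D m (E ρ) (E σ) ≤ D n ρ σ)
    (hconv : ∀ (n : Type) [Fintype n] [DecidableEq n] (r : ℕ) (p : Fin r → ℝ),
      (∀ i, 0 ≤ p i) → (∑ i, p i = 1) →
      ∀ (ρ σ : Fin r → Matrix n n ℂ), (∀ i, IsDensity (ρ i)) → (∀ i, IsDensity (σ i)) →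
      D n (∑ i, (p i : ℂ) • ρ i) (∑ i, (p i : ℂ) • σ i) ≤ ∑ i, p i * D n (ρ i) (σ i))
    (hconc : ∀ (n : Type) [Fintype n] [DecidableEq n] (r : ℕ) (p q : Fin r → ℝ),
      (∀ i, 0 ≤ p i) → (∑ i, p i = 1) → (∀ i, 0 ≤ q i) → (∑ i, q i = 1) →
      ∀ (ρ σ : Fin r → Matrix n n ℂ), (∀ i, IsDensity (ρ i)) → (∀ i, IsDensity (σ i)) →
      ∑ i, p i * D n (ρ i) (σ i) ≤ D (n × Fin r) (blockDiag p ρ) (blockDiag q σ)) :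
    ∀ (n m : Type) [Fintype n] [DecidableEq n] [Fintype m] [DecidableEq m]
      (r : ℕ) (E : Fin r → (Matrix n n ℂ → Matrix m m ℂ)),
      (∀ i, IsCP (E i)) → (∀ ρ : Matrix n n ℂ, (∑ i, E i ρ).trace = ρ.trace) →
      ∀ (ρ σ : Matrix n n ℂ), IsDensity ρ → IsDensity σ →
      ∀ (p q : Fin r → ℝ) (ρs σs : Fin r → Matrix m m ℂ),
        (∀ i, 0 ≤ p i) → (∀ i, 0 ≤ q i) →
        (∀ i, IsDensity (ρs i)) → (∀ i, IsDensity (σs i)) →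
        (∀ i, E i ρ = (p i : ℂ) • ρs i) → (∀ i, E i σ = (q i : ℂ) • σs i) →
        ∑ i, p i * D m (ρs i) (σs i) ≤ D n ρ σ := by
  intro n m _ _ _ _ r E hCP htr ρ σ hρ hσ p q ρs σs hp hq hρs hσs hEρ hEσ
  choose ri Ki hKi using hCP
  -- probability sums
  have hpsum : ∑ i, p i = 1 := by
    have h := htr ρ
    rw [hρ.2, Matrix.trace_sum] at h
    have h2 : ∑ i, ((p i : ℂ)) = 1 := by
      rw [← h]
      refine Finset.sum_congr rfl fun i _ => ?_
      rw [hEρ i, Matrix.trace_smul, (hρs i).2, smul_eq_mul, mul_one]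
    exact_mod_cast h2
  have hqsum : ∑ i, q i = 1 := by
    have h := htr σ
    rw [hσ.2, Matrix.trace_sum] at h
    have h2 : ∑ i, ((q i : ℂ)) = 1 := by
      rw [← h]
      refine Finset.sum_congr rfl fun i _ => ?_
      rw [hEσ i, Matrix.trace_smul, (hσs i).2, smul_eq_mul, mul_one]
    exact_mod_cast h2
  -- total Kraus family
  set S := (Σ i : Fin r, Fin (ri i)) with hS
  set R := Fintype.card S with hR
  set e : Fin R ≃ S := (Fintype.equivFin S).symm with he
  set L : S → Matrix (m × Fin r) n ℂ :=
    fun s => Matrix.of (fun a b => if a.2 = s.1 then Ki s.1 s.2 a.1 b else 0) with hL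
  set K : Fin R → Matrix (m × Fin r) n ℂ := fun j => L (e j) with hK
  set F : Matrix n n ℂ → Matrix (m × Fin r) (m × Fin r) ℂ :=
    fun X => Matrix.of (fun a b => if a.2 = b.2 then E a.2 X a.1 b.1 else 0) with hF
  -- key entrywise computation
  have key : ∀ (X : Matrix n n ℂ) (s : S) (a b : m × Fin r),
      (L s * X * (L s)ᴴ) a b =
        if a.2 = s.1 ∧ b.2 = s.1 then (Ki s.1 s.2 * X * (Ki s.1 s.2)ᴴ) a.1 b.1 else 0 := by
    intro X s a b
    simp only [hL, Matrix.mul_apply, Matrix.conjTranspose_apply, Matrix.of_apply]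
    by_cases ha : a.2 = s.1 <;> by_cases hb : b.2 = s.1 <;>
      simp [ha, hb, Finset.mul_sum, Finset.sum_mul]
  have hFkraus : ∀ X, F X = ∑ j, K j * X * (K j)ᴴ := by
    intro X
    have hre : ∑ j, K j * X * (K j)ᴴ = ∑ s : S, L s * X * (L s)ᴴ :=
      e.sum_comp (fun s => L s * X * (L s)ᴴ)
    rw [hre]
    ext a b
    rw [Matrix.sum_apply]
    rw [← Finset.univ_sigma_univ, Finset.sum_sigma]
    simp only [key]
    by_cases hab : a.2 = b.2
    · have : ∀ i, (∑ k : Fin (ri i),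
          if a.2 = i ∧ b.2 = i then (Ki i k * X * (Ki i k)ᴴ) a.1 b.1 else 0) =
          if a.2 = i then ∑ k : Fin (ri i), (Ki i k * X * (Ki i k)ᴴ) a.1 b.1 else 0 := by
        intro i
        by_cases h : a.2 = i
        · simp [h, ← hab]
        · simp [h]
      rw [Finset.sum_congr rfl fun i _ => this i]
      simp only [Finset.sum_ite_eq, Finset.mem_univ, if_true]
      simp only [hF, Matrix.of_apply, if_pos hab, hKi a.2 X, Matrix.sum_apply]
    · rw [show (F X) a b = 0 from by simp [hF, hab]]
      refine (Finset.sum_eq_zero fun i _ => Finset.sum_eq_zero fun k _ => ?_).symm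
      rw [if_neg]
      rintro ⟨h1, h2⟩
      exact hab (h1.trans h2.symm)
  -- trace preservation of the full Kraus family
  have hA : (∑ i, ∑ k, (Ki i k)ᴴ * Ki i k) = 1 := by
    apply eq_one_of_trace_mul
    intro X
    rw [← htr X, Matrix.trace_sum, Matrix.sum_mul, Matrix.trace_sum]
    refine Finset.sum_congr rfl fun i _ => ?_
    rw [hKi i X, Matrix.trace_sum, Matrix.sum_mul, Matrix.trace_sum]
    refine Finset.sum_congr rfl fun k _ => ?_
    rw [Matrix.trace_mul_cycle, Matrix.trace_mul_cycle]
  have keyTP : ∀ s : S, (L s)ᴴ * L s = (Ki s.1 s.2)ᴴ * Ki s.1 s.2 := by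
    intro s
    ext b b'
    simp only [hL, Matrix.mul_apply, Matrix.conjTranspose_apply, Matrix.of_apply]
    rw [Fintype.sum_prod_type]
    simp [apply_ite (star : ℂ → ℂ), ite_mul, mul_ite]
  have hKTP : ∑ j, (K j)ᴴ * K j = 1 := by
    have hre : ∑ j, (K j)ᴴ * K j = ∑ s : S, (L s)ᴴ * L s :=
      e.sum_comp (fun s => (L s)ᴴ * L s)
    rw [hre, Finset.sum_congr rfl fun s _ => keyTP s, ← hA,
      ← Finset.univ_sigma_univ, Finset.sum_sigma]
  -- apply hypotheses
  have hFρ : F ρ = blockDiag p ρs := by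
    ext a b
    simp only [hF, Matrix.of_apply, _root_.blockDiag, hEρ, Matrix.smul_apply, smul_eq_mul]
  have hFσ : F σ = blockDiag q σs := by
    ext a b
    simp only [hF, Matrix.of_apply, _root_.blockDiag, hEσ, Matrix.smul_apply, smul_eq_mul]
  have h1 := hcontr n (m × Fin r) F ⟨R, K, hFkraus, hKTP⟩ ρ σ hρ hσ
  have h2 := hconc m r p q hp hpsum hq hqsum ρs σs hρs hσs
  rw [hFρ, hFσ] at h1
  linarith
end

section
/- Let D satisfy contractivity, joint convexity, and direct-sum concavity, let F = ⊕_N F_N be a direct sum of convex sets of states, and define M^D(ρ) = min_{σ∈F} D(ρ,σ) and M^D_N(ρ) = min_{σ∈F_N} D(ρ,σ). Then for any block-diagonal state ρ = ⊕_N p_N ρ^(N), M^D(⊕_N p_N ρ^(N)) = Σ_N p_N M^D_N(ρ^(N)). -/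
open Finset ComplexOrder Matrix

/- ----------------- auxiliary material ----------------- -/

lemma my_le_of_forall_pos_le_add {a b : ℝ} (h : ∀ ε : ℝ, 0 < ε → a ≤ b + ε) : a ≤ b := by
  by_contra hc
  push_neg at hc
  have := h ((a - b) / 2) (by linarith)
  linarith

section aux

variable {n : Type} [Fintype n] [DecidableEq n]

lemma my_stdB_conjT (i j : n) : (Matrix.single i j (1:ℂ))ᴴ = Matrix.single j i 1 := by
  ext a b
  simp [Matrix.single, conjTranspose_apply, and_comm]

lemma my_sum_stdB_diag : ∑ c : n, Matrix.single c c (1:ℂ) = 1 := by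
  ext a b
  simp only [Matrix.sum_apply, Matrix.single, of_apply, Matrix.one_apply]
  by_cases h : a = b
  · subst h; simp
  · rw [if_neg h]
    apply Finset.sum_eq_zero
    intro c _
    rw [if_neg]
    rintro ⟨rfl, rfl⟩
    exact h rfl

/-- the fixed pure state -/
noncomputable def tau0 (e0 : n) : Matrix n n ℂ := Matrix.single e0 e0 1

lemma tau0_density (e0 : n) : IsDensity (tau0 e0) := by
  constructor
  · have : tau0 e0 = (Matrix.replicateCol Unit (Pi.single e0 (1 : ℂ))) *
        (Matrix.replicateCol Unit (Pi.single e0 (1 : ℂ)))ᴴ := by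
      ext a b
      simp only [tau0, Matrix.mul_apply, Matrix.replicateCol_apply, Matrix.single, of_apply,
        Matrix.conjTranspose_apply, Pi.single_apply, Finset.univ_unique, Finset.sum_singleton]
      by_cases ha : a = e0 <;> by_cases hb : b = e0 <;>
        simp_all [eq_comm]
    rw [this]
    exact posSemidef_self_mul_conjTranspose _
  · simp [tau0, Matrix.trace, Matrix.diag, Matrix.single]

/-- replacer channel Kraus operators -/
noncomputable def replK (e0 : n) (i : Fin (Fintype.card n)) : Matrix n n ℂ :=
  Matrix.single e0 ((Fintype.equivFin n).symm i) 1

lemma replK_sum (e0 : n) : ∑ i, (replK e0 i)ᴴ * replK e0 i = 1 := by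
  have h1 : ∀ i : Fin (Fintype.card n), (replK e0 i)ᴴ * replK e0 i =
      Matrix.single ((Fintype.equivFin n).symm i) ((Fintype.equivFin n).symm i) (1:ℂ) := by
    intro i
    rw [replK, my_stdB_conjT]
    simp [Matrix.single_mul_single_same]
  simp only [h1]
  rw [Equiv.sum_comp (Fintype.equivFin n).symm
    (fun c => Matrix.single c c (1:ℂ))]
  exact my_sum_stdB_diag

lemma replK_mid (e0 c : n) (ρ : Matrix n n ℂ) :
    Matrix.single e0 c 1 * ρ * Matrix.single c e0 1 = (ρ c c) • Matrix.single e0 e0 1 := by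
  ext a b
  simp only [Matrix.mul_apply, Matrix.single, of_apply, Matrix.smul_apply, smul_eq_mul,
    ite_mul, one_mul, zero_mul, mul_ite, mul_one, mul_zero]
  by_cases ha : e0 = a <;> by_cases hb : e0 = b <;> by_cases hab : a = b <;>
    simp_all [Finset.sum_ite_eq, Finset.sum_ite_eq', mul_comm]

lemma replK_apply (e0 : n) (ρ : Matrix n n ℂ) (htr : ρ.trace = 1) :
    ∑ i, replK e0 i * ρ * (replK e0 i)ᴴ = tau0 e0 := by
  have h1 : ∀ i : Fin (Fintype.card n), replK e0 i * ρ * (replK e0 i)ᴴ =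
      (ρ ((Fintype.equivFin n).symm i) ((Fintype.equivFin n).symm i)) • tau0 e0 := by
    intro i
    rw [replK, my_stdB_conjT, replK_mid]
    rfl
  simp only [h1, ← Finset.sum_smul]
  rw [Equiv.sum_comp (Fintype.equivFin n).symm (fun c => ρ c c)]
  have h2 : ∑ c, ρ c c = ρ.trace := rfl
  rw [h2, htr, one_smul]

/-- uniform lower bound on `D` over densities -/
lemma lower_bound
    (D : ∀ (n : Type) [Fintype n] [DecidableEq n], Matrix n n ℂ → Matrix n n ℂ → ℝ)
    (hcontr : ∀ (n m : Type) [Fintype n] [DecidableEq n] [Fintype m] [DecidableEq m]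
      (E : Matrix n n ℂ → Matrix m m ℂ), IsCPTP E →
      ∀ ρ σ : Matrix n n ℂ, IsDensity ρ → IsDensity σ → D m (E ρ) (E σ) ≤ D n ρ σ)
    (n : Type) [Fintype n] [DecidableEq n] [Nonempty n] :
    ∃ c : ℝ, ∀ ρ σ : Matrix n n ℂ, IsDensity ρ → IsDensity σ → c ≤ D n ρ σ := by
  obtain ⟨e0⟩ := ‹Nonempty n›
  refine ⟨D n (tau0 e0) (tau0 e0), fun ρ σ hρ hσ => ?_⟩
  have hE : IsCPTP (fun ρ : Matrix n n ℂ => ∑ i, replK e0 i * ρ * (replK e0 i)ᴴ) :=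
    ⟨Fintype.card n, replK e0, fun _ => rfl, replK_sum e0⟩
  have := hcontr n n _ hE ρ σ hρ hσ
  rwa [replK_apply e0 ρ hρ.2, replK_apply e0 σ hσ.2] at this

variable {r : ℕ}

/-- embedding Kraus operator into sector `N` -/
def embK (N : Fin r) : Matrix (n × Fin r) n ℂ :=
  Matrix.of fun a b => if a.2 = N ∧ a.1 = b then 1 else 0

lemma embK_mul (N : Fin r) : (embK (n := n) N)ᴴ * embK (n := n) N = (1 : Matrix n n ℂ) := by
  ext b b'
  simp only [Matrix.mul_apply, Matrix.conjTranspose_apply, embK, Matrix.one_apply,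
    Matrix.of_apply, apply_ite (star : ℂ → ℂ), star_one, star_zero, ite_mul, one_mul, zero_mul]
  rw [Fintype.sum_prod_type]
  by_cases h : b = b'
  · subst h
    simp [ite_and, Finset.sum_ite_eq, Finset.sum_ite_eq']
  · rw [if_neg h]
    apply Finset.sum_eq_zero
    intro a _
    apply Finset.sum_eq_zero
    intro i _
    by_cases h1 : i = N ∧ a = b <;> by_cases h2 : i = N ∧ a = b' <;>
      simp_all

lemma embK_apply (N : Fin r) (ρ : Matrix n n ℂ) (a b : n × Fin r) :
    (embK (n := n) N * ρ * (embK (n := n) N)ᴴ : Matrix (n × Fin r) (n × Fin r) ℂ) a b =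
      if a.2 = N ∧ b.2 = N then ρ a.1 b.1 else 0 := by
  simp only [Matrix.mul_apply, Matrix.conjTranspose_apply, embK, Matrix.of_apply,
    apply_ite (star : ℂ → ℂ), star_one, star_zero, ite_mul, one_mul, zero_mul,
    mul_ite, mul_one, mul_zero]
  by_cases ha : a.2 = N <;> by_cases hb : b.2 = N <;>
    simp [ha, hb, Finset.sum_ite_eq, Finset.sum_ite_eq']

lemma embK_sum1 (N : Fin r) : (∑ _i : Fin 1, (embK (n := n) N)ᴴ * embK (n := n) N) = 1 := by
  simp [embK_mul]

lemma embK_density (N : Fin r) (ρ : Matrix n n ℂ) (hρ : IsDensity ρ) :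
    IsDensity (embK (n := n) N * ρ * (embK (n := n) N)ᴴ) := by
  refine ⟨hρ.1.mul_mul_conjTranspose_same _, ?_⟩
  rw [Matrix.trace_mul_cycle, embK_mul, Matrix.one_mul, hρ.2]

lemma embK_cptp (N : Fin r) :
    IsCPTP (fun ρ : Matrix n n ℂ => embK (n := n) N * ρ * (embK (n := n) N)ᴴ) := by
  exact ⟨1, fun _ => embK (n := n) N, fun ρ => by simp, embK_sum1 N⟩

lemma blockDiag_eq_sum_s7 (p : Fin r → ℝ) (ρ : Fin r → Matrix n n ℂ) :
    _root_.blockDiag p ρ = ∑ N, (p N : ℂ) • (embK (n := n) N * ρ N * (embK (n := n) N)ᴴ) := by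
  ext a b
  simp only [_root_.blockDiag, Matrix.sum_apply, Matrix.smul_apply, embK_apply, smul_eq_mul,
    mul_ite, mul_zero]
  by_cases h : a.2 = b.2
  · rw [if_pos h, Finset.sum_eq_single a.2]
    · simp [h.symm]
    · intro c _ hc
      rw [if_neg]
      exact fun hh => hc hh.1.symm
    · simp
  · rw [if_neg h]
    symm
    apply Finset.sum_eq_zero
    intro c _
    rw [if_neg]
    rintro ⟨rfl, hb⟩
    exact h hb.symm

end aux

/-- for a contractive, jointly convex, direct-sum concave distance `D` and
a free set `F = ⊕_N F_N` built from compact convex sets `F_N` of states on each sector,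
the induced measure of a block-diagonal state decomposes as the `p`-average of the
sector-wise measures:
`min_{σ∈F} D(⊕ p_N ρ^(N), σ) = Σ_N p_N min_{σ∈F_N} D(ρ^(N), σ)`. -/
theorem stmt7
    (D : ∀ (n : Type) [Fintype n] [DecidableEq n], Matrix n n ℂ → Matrix n n ℂ → ℝ)
    (hcontr : ∀ (n m : Type) [Fintype n] [DecidableEq n] [Fintype m] [DecidableEq m]
      (E : Matrix n n ℂ → Matrix m m ℂ), IsCPTP E →
      ∀ ρ σ : Matrix n n ℂ, IsDensity ρ → IsDensity σ → D m (E ρ) (E σ) ≤ D n ρ σ)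
    (hconv : ∀ (n : Type) [Fintype n] [DecidableEq n] (r : ℕ) (p : Fin r → ℝ),
      (∀ i, 0 ≤ p i) → (∑ i, p i = 1) →
      ∀ (ρ σ : Fin r → Matrix n n ℂ), (∀ i, IsDensity (ρ i)) → (∀ i, IsDensity (σ i)) →
      D n (∑ i, (p i : ℂ) • ρ i) (∑ i, (p i : ℂ) • σ i) ≤ ∑ i, p i * D n (ρ i) (σ i))
    (hconc : ∀ (n : Type) [Fintype n] [DecidableEq n] (r : ℕ) (p q : Fin r → ℝ),
      (∀ i, 0 ≤ p i) → (∑ i, p i = 1) → (∀ i, 0 ≤ q i) → (∑ i, q i = 1) →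
      ∀ (ρ σ : Fin r → Matrix n n ℂ), (∀ i, IsDensity (ρ i)) → (∀ i, IsDensity (σ i)) →
      ∑ i, p i * D n (ρ i) (σ i) ≤ D (n × Fin r) (blockDiag p ρ) (blockDiag q σ)) :
    ∀ (n : Type) [Fintype n] [DecidableEq n] (r : ℕ)
      (F : Fin r → Set (Matrix n n ℂ)),
      (∀ N, (F N).Nonempty) → (∀ N, IsCompact (F N)) → (∀ N, Convex ℝ (F N)) →
      (∀ N σ, σ ∈ F N → IsDensity σ) →
      ∀ (p : Fin r → ℝ), (∀ N, 0 ≤ p N) → (∑ N, p N = 1) →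
      ∀ (ρ : Fin r → Matrix n n ℂ), (∀ N, IsDensity (ρ N)) →
      sInf {x : ℝ | ∃ (q : Fin r → ℝ) (σ : Fin r → Matrix n n ℂ),
          (∀ N, 0 ≤ q N) ∧ (∑ N, q N = 1) ∧ (∀ N, σ N ∈ F N) ∧
          x = D (n × Fin r) (blockDiag p ρ) (blockDiag q σ)}
        = ∑ N, p N * sInf {x : ℝ | ∃ σ ∈ F N, x = D n (ρ N) σ} := by
  intro n _ _ r F hFne hFcpt hFcvx hFdens p hp hpsum ρ hρ
  -- basic nonemptiness facts
  have hrpos : 0 < r := by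
    by_contra h
    push_neg at h
    interval_cases r
    simp at hpsum
  have hn : Nonempty n := by
    by_contra h
    rw [not_nonempty_iff] at h
    have := (hρ ⟨0, hrpos⟩).2
    simp [Matrix.trace] at this
  set S : Set ℝ := {x : ℝ | ∃ (q : Fin r → ℝ) (σ : Fin r → Matrix n n ℂ),
          (∀ N, 0 ≤ q N) ∧ (∑ N, q N = 1) ∧ (∀ N, σ N ∈ F N) ∧
          x = D (n × Fin r) (blockDiag p ρ) (blockDiag q σ)} with hS
  set T : Fin r → Set ℝ := fun N => {x : ℝ | ∃ σ ∈ F N, x = D n (ρ N) σ} with hT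
  -- lower bound constant for sector distances
  obtain ⟨c, hc⟩ := lower_bound D hcontr n
  have hTne : ∀ N, (T N).Nonempty := by
    intro N
    obtain ⟨σ, hσ⟩ := hFne N
    exact ⟨D n (ρ N) σ, σ, hσ, rfl⟩
  have hTbdd : ∀ N, BddBelow (T N) := by
    intro N
    refine ⟨c, fun x hx => ?_⟩
    obtain ⟨σ, hσ, rfl⟩ := hx
    exact hc (ρ N) σ (hρ N) (hFdens N σ hσ)
  -- choose some free states
  have hσ0 : ∃ σ0 : Fin r → Matrix n n ℂ, ∀ N, σ0 N ∈ F N := by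
    choose σ0 hσ0 using hFne
    exact ⟨σ0, hσ0⟩
  obtain ⟨σ0, hσ0⟩ := hσ0
  have hSne : S.Nonempty :=
    ⟨D (n × Fin r) (blockDiag p ρ) (blockDiag p σ0), p, σ0, hp, hpsum, hσ0, rfl⟩
  -- key upper bound: D(blockDiag p ρ, blockDiag p σ) ≤ ∑ p N * D(ρ N, σ N)
  have hkey : ∀ σ : Fin r → Matrix n n ℂ, (∀ N, σ N ∈ F N) →
      D (n × Fin r) (blockDiag p ρ) (blockDiag p σ) ≤ ∑ N, p N * D n (ρ N) (σ N) := by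
    intro σ hσ
    have hρd : ∀ N, IsDensity (embK (n := n) N * ρ N * (embK (n := n) N)ᴴ) :=
      fun N => embK_density N (ρ N) (hρ N)
    have hσd : ∀ N, IsDensity (embK (n := n) N * σ N * (embK (n := n) N)ᴴ) :=
      fun N => embK_density N (σ N) (hFdens N (σ N) (hσ N))
    have h1 := hconv (n × Fin r) r p hp hpsum
      (fun N => embK (n := n) N * ρ N * (embK (n := n) N)ᴴ) (fun N => embK (n := n) N * σ N * (embK (n := n) N)ᴴ) hρd hσd
    rw [← blockDiag_eq_sum_s7, ← blockDiag_eq_sum_s7] at h1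
    refine h1.trans (Finset.sum_le_sum fun N _ => ?_)
    exact mul_le_mul_of_nonneg_left
      (hcontr n (n × Fin r) _ (embK_cptp N) (ρ N) (σ N) (hρ N)
        (hFdens N (σ N) (hσ N))) (hp N)
  apply le_antisymm
  · -- sInf S ≤ ∑ p N * sInf (T N)
    apply my_le_of_forall_pos_le_add
    intro ε hε
    -- choose near-optimal σ N in each sector
    have hchoice : ∀ N : Fin r, ∃ σ ∈ F N, D n (ρ N) σ < sInf (T N) + ε := by
      intro N
      obtain ⟨x, hx, hxlt⟩ := Real.lt_sInf_add_pos (hTne N) hε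
      obtain ⟨σ, hσ, rfl⟩ := hx
      exact ⟨σ, hσ, hxlt⟩
    choose σ hσmem hσlt using hchoice
    have hmem : D (n × Fin r) (blockDiag p ρ) (blockDiag p σ) ∈ S :=
      ⟨p, σ, hp, hpsum, hσmem, rfl⟩
    haveI := hn
    haveI : Nonempty (Fin r) := ⟨⟨0, hrpos⟩⟩
    have hSbdd : BddBelow S := by
      refine ⟨c, fun x hx => ?_⟩
      obtain ⟨q, σ', hq, hqsum, hσ', rfl⟩ := hx
      have h2 := hconc n r p q hp hpsum hq hqsum ρ σ' hρ
        (fun N => hFdens N (σ' N) (hσ' N))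
      refine le_trans ?_ h2
      calc c = c * ∑ N, p N := by rw [hpsum, mul_one]
        _ = ∑ N, c * p N := by rw [Finset.mul_sum]
        _ ≤ ∑ N, p N * D n (ρ N) (σ' N) := by
            refine Finset.sum_le_sum fun N _ => ?_
            rw [mul_comm]
            exact mul_le_mul_of_nonneg_left
              (hc (ρ N) (σ' N) (hρ N) (hFdens N (σ' N) (hσ' N))) (hp N)
    refine (csInf_le hSbdd hmem).trans ?_
    refine (hkey σ hσmem).trans ?_
    calc ∑ N, p N * D n (ρ N) (σ N)
        ≤ ∑ N, p N * (sInf (T N) + ε) := by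
          refine Finset.sum_le_sum fun N _ => ?_
          exact mul_le_mul_of_nonneg_left (hσlt N).le (hp N)
      _ = ∑ N, p N * sInf (T N) + ε := by
          simp only [mul_add]
          rw [Finset.sum_add_distrib, ← Finset.sum_mul, hpsum, one_mul]
  · -- ∑ p N * sInf (T N) ≤ sInf S
    apply le_csInf hSne
    intro x hx
    obtain ⟨q, σ', hq, hqsum, hσ', rfl⟩ := hx
    have h2 := hconc n r p q hp hpsum hq hqsum ρ σ' hρ
      (fun N => hFdens N (σ' N) (hσ' N))
    refine le_trans ?_ h2
    refine Finset.sum_le_sum fun N _ => ?_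
    refine mul_le_mul_of_nonneg_left ?_ (hp N)
    exact csInf_le (hTbdd N) ⟨σ' N, hσ' N, rfl⟩
end

section
/- Let ρ be a density operator, H a Hermitian operator, and Π a projector with Πρ = ρ. Then the quantum Fisher information satisfies F(ρ, H) = F(ρ, ΠHΠ) + 4V(ρ, H) − 4V(ρ, ΠHΠ), where V(ρ, X) = Tr(ρX²) − Tr(ρX)² is the variance. -/
open Finset ComplexOrder Matrix

/-- The variance `V(ρ, X) = Tr(ρX²) − Tr(ρX)²`. -/
noncomputable def qVar {n : Type} [Fintype n] (ρ X : Matrix n n ℂ) : ℝ :=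
  (ρ * X * X).trace.re - ((ρ * X).trace.re) ^ 2

/-- The quantum Fisher information
`F(ρ,H) = 2 Σ_{i,j : λᵢ+λⱼ>0} (λᵢ−λⱼ)²/(λᵢ+λⱼ) |⟨i|H|j⟩|²`,
computed in an eigenbasis of `ρ` (junk value `0` on non-Hermitian input). -/
noncomputable def qfi {n : Type} [Fintype n] [DecidableEq n]
    (ρ H : Matrix n n ℂ) : ℝ :=
  if hρ : ρ.IsHermitian then
    2 * ∑ i, ∑ j,
      if 0 < hρ.eigenvalues i + hρ.eigenvalues j then
        (hρ.eigenvalues i - hρ.eigenvalues j) ^ 2 / (hρ.eigenvalues i + hρ.eigenvalues j) *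
          Complex.normSq
            ((((hρ.eigenvectorUnitary : Matrix n n ℂ))ᴴ * H *
              (hρ.eigenvectorUnitary : Matrix n n ℂ)) i j)
      else 0
  else 0

section aux
variable {n : Type} [Fintype n] [DecidableEq n]

lemma row_collapse (B M : Matrix n n ℂ) (i j : n) (hB : ∀ k, B i k = if i = k then 1 else 0) :
    (B * M) i j = M i j := by
  simp [Matrix.mul_apply, hB, ite_mul]

lemma col_collapse (B M : Matrix n n ℂ) (i j : n) (hB : ∀ k, B k j = if k = j then 1 else 0) :
    (M * B) i j = M i j := by
  simp [Matrix.mul_apply, hB, mul_ite]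

lemma key_combinatorial (lam : n → ℝ) (hnn : ∀ i, 0 ≤ lam i) (A B : Matrix n n ℂ)
    (hA : A.IsHermitian) (hAB : (B * A * B).IsHermitian)
    (hBD : ∀ i j, B i j * (lam j : ℂ) = if i = j then (lam j : ℂ) else 0)
    (hDB : ∀ i j, (lam i : ℂ) * B i j = if i = j then (lam i : ℂ) else 0) :
    2 * ∑ i, ∑ j, (if 0 < lam i + lam j then
        (lam i - lam j) ^ 2 / (lam i + lam j) * Complex.normSq (A i j) else 0)
    = 2 * ∑ i, ∑ j, (if 0 < lam i + lam j then
        (lam i - lam j) ^ 2 / (lam i + lam j) * Complex.normSq ((B * A * B) i j) else 0)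
    + 4 * (∑ i, ∑ j, lam i * Complex.normSq (A i j))
    - 4 * (∑ i, ∑ j, lam i * Complex.normSq ((B * A * B) i j)) := by
  have hsymA : ∀ i j, Complex.normSq (A i j) = Complex.normSq (A j i) := by
    intro i j
    rw [← hA.apply i j]
    simp [conjTranspose_apply, Complex.normSq_conj]
  have hsymA' : ∀ i j, Complex.normSq ((B * A * B) i j) = Complex.normSq ((B * A * B) j i) := by
    intro i j
    rw [← hAB.apply i j]
    simp [conjTranspose_apply, Complex.normSq_conj]
  have hBrow : ∀ i, lam i ≠ 0 → ∀ k, B i k = if i = k then 1 else 0 := by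
    intro i hi k
    have h := hDB i k
    have hlc : (lam i : ℂ) ≠ 0 := by exact_mod_cast hi
    by_cases hik : i = k
    · simp only [if_pos hik] at h ⊢
      field_simp at h
      exact h
    · simp only [if_neg hik] at h ⊢
      exact (mul_eq_zero.mp h).resolve_left hlc
  have hBcol : ∀ j, lam j ≠ 0 → ∀ k, B k j = if k = j then 1 else 0 := by
    intro j hj k
    have h := hBD k j
    have hlc : (lam j : ℂ) ≠ 0 := by exact_mod_cast hj
    by_cases hkj : k = j
    · simp only [if_pos hkj] at h ⊢
      field_simp at h
      exact h
    · simp only [if_neg hkj] at h ⊢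
      exact (mul_eq_zero.mp h).resolve_right hlc
  have hfix : ∀ i j, lam i ≠ 0 → lam j ≠ 0 → (B * A * B) i j = A i j := by
    intro i j hi hj
    rw [col_collapse B (B * A) i j (hBcol j hj), row_collapse B A i j (hBrow i hi)]
  -- reduce to a symmetric sum identity
  set g : n → n → ℝ := fun i j =>
    (if 0 < lam i + lam j then (lam i - lam j) ^ 2 / (lam i + lam j) *
        (Complex.normSq (A i j) - Complex.normSq ((B * A * B) i j)) else 0)
      - 2 * lam i * (Complex.normSq (A i j) - Complex.normSq ((B * A * B) i j)) with hgdef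
  have hg : ∀ i j, g i j + g j i = 0 := by
    intro i j
    have hsA := hsymA i j
    have hsA' := hsymA' i j
    rcases (hnn i).lt_or_eq with hi | hi <;> rcases (hnn j).lt_or_eq with hj | hj
    · -- both positive
      have h1 : (B * A * B) i j = A i j := hfix i j hi.ne' hj.ne'
      have h2 : (B * A * B) j i = A j i := hfix j i hj.ne' hi.ne'
      simp [hgdef, h1, h2]
    · -- lam i > 0, lam j = 0
      have hc1 : 0 < lam i + lam j := by rw [← hj, add_zero]; exact hi
      have hc2 : 0 < lam j + lam i := by rw [← hj, zero_add]; exact hi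
      simp only [hgdef, if_pos hc1, if_pos hc2]
      rw [hsA, hsA', ← hj]
      have : lam i ≠ 0 := hi.ne'
      field_simp
      ring
    · -- lam i = 0, lam j > 0
      have hc1 : 0 < lam i + lam j := by rw [← hi, zero_add]; exact hj
      have hc2 : 0 < lam j + lam i := by rw [← hi, add_zero]; exact hj
      simp only [hgdef, if_pos hc1, if_pos hc2]
      rw [hsA, hsA', ← hi]
      have : lam j ≠ 0 := hj.ne'
      field_simp
      ring
    · -- both zero
      have hc : ¬ (0 < lam i + lam j) := by rw [← hi, ← hj]; simp
      have hc' : ¬ (0 < lam j + lam i) := by rw [← hi, ← hj]; simp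
      simp [hgdef, hc, hc', ← hi, ← hj]
  have hsum : ∑ i, ∑ j, g i j = 0 := by
    have h1 : ∑ i, ∑ j, g j i = ∑ i, ∑ j, g i j := Finset.sum_comm
    have h2 : ∑ i, ∑ j, (g i j + g j i) = (0 : ℝ) := by
      simp [hg]
    have h3 : ∑ i, ∑ j, (g i j + g j i) = (∑ i, ∑ j, g i j) + ∑ i, ∑ j, g j i := by
      simp [Finset.sum_add_distrib]
    rw [h3, h1] at h2
    linarith
  -- expand g back
  have hexp : ∑ i, ∑ j, g i j =
      (∑ i, ∑ j, (if 0 < lam i + lam j then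
          (lam i - lam j) ^ 2 / (lam i + lam j) * Complex.normSq (A i j) else 0))
      - (∑ i, ∑ j, (if 0 < lam i + lam j then
          (lam i - lam j) ^ 2 / (lam i + lam j) * Complex.normSq ((B * A * B) i j) else 0))
      - 2 * (∑ i, ∑ j, lam i * Complex.normSq (A i j))
      + 2 * (∑ i, ∑ j, lam i * Complex.normSq ((B * A * B) i j)) := by
    simp only [hgdef, Finset.mul_sum, ← Finset.sum_sub_distrib, ← Finset.sum_add_distrib]
    refine Finset.sum_congr rfl fun i _ => Finset.sum_congr rfl fun j _ => ?_
    by_cases hc : 0 < lam i + lam j <;> simp [hc] <;> ring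
  rw [hexp] at hsum
  linarith

end aux

/-- for a projector `Π` with `Πρ = ρ`, the quantum Fisher information
satisfies `F(ρ, H) = F(ρ, ΠHΠ) + 4V(ρ, H) − 4V(ρ, ΠHΠ)`. -/
theorem stmt9 {n : Type} [Fintype n] [DecidableEq n]
    (ρ H P : Matrix n n ℂ) (hρ : IsDensity ρ) (hH : H.IsHermitian)
    (hPherm : P.IsHermitian) (hPP : P * P = P) (hPρ : P * ρ = ρ) :
    qfi ρ H = qfi ρ (P * H * P) + 4 * qVar ρ H - 4 * qVar ρ (P * H * P) := by
  obtain ⟨hpsd, htr⟩ := hρ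
  have hh : ρ.IsHermitian := hpsd.1
  rw [qfi, qfi, dif_pos hh, dif_pos hh, qVar, qVar]
  set U : Matrix n n ℂ := (hh.eigenvectorUnitary : Matrix n n ℂ) with hUdef
  set lam : n → ℝ := hh.eigenvalues with hlamdef
  have hnn : ∀ i, 0 ≤ lam i := fun i => hpsd.eigenvalues_nonneg i
  have hUU : Uᴴ * U = 1 := by
    simpa [star_eq_conjTranspose] using
      (Matrix.mem_unitaryGroup_iff'.mp hh.eigenvectorUnitary.2)
  have hUU' : U * Uᴴ = 1 := by
    simpa [star_eq_conjTranspose] using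
      (Matrix.mem_unitaryGroup_iff.mp hh.eigenvectorUnitary.2)
  set D : Matrix n n ℂ := diagonal (RCLike.ofReal ∘ lam) with hDdef
  have hspec : ρ = U * D * Uᴴ := by
    exact hh.spectral_theorem
  have hD : D = Uᴴ * ρ * U := by
    rw [hspec]
    simp only [Matrix.mul_assoc]
    rw [hUU, Matrix.mul_one, ← Matrix.mul_assoc, hUU, Matrix.one_mul]
  -- multiplicativity of conjugation
  have e : ∀ X Y : Matrix n n ℂ, (Uᴴ * X * U) * (Uᴴ * Y * U) = Uᴴ * (X * Y) * U := by
    intro X Y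
    have h1 : U * (Uᴴ * (Y * U)) = Y * U := by
      rw [← Matrix.mul_assoc, hUU', one_mul]
    simp only [Matrix.mul_assoc, h1]
  have hρP : ρ * P = ρ := by
    have h := congrArg conjTranspose hPρ
    simpa [conjTranspose_mul, hPherm.eq, hh.eq] using h
  set A : Matrix n n ℂ := Uᴴ * H * U with hAdef
  set B : Matrix n n ℂ := Uᴴ * P * U with hBdef
  have hA' : Uᴴ * (P * H * P) * U = B * A * B := by
    rw [hBdef, hAdef, e, e]
  have hAherm : A.IsHermitian := by
    show Aᴴ = A
    rw [hAdef]
    simp [conjTranspose_mul, Matrix.mul_assoc, hH.eq]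
  have hABherm : (B * A * B).IsHermitian := by
    rw [← hA']
    show _ᴴ = _
    simp [conjTranspose_mul, Matrix.mul_assoc, hH.eq, hPherm.eq]
  have hBD : B * D = D := by
    rw [hD, hBdef, e, hPρ]
  have hDB : D * B = D := by
    rw [hD, hBdef, e, hρP]
  have hBDe : ∀ i j, B i j * (lam j : ℂ) = if i = j then (lam j : ℂ) else 0 := by
    intro i j
    have h := congrFun (congrFun hBD i) j
    rw [hDdef, Matrix.mul_diagonal] at h
    by_cases hij : i = j
    · subst hij
      simpa [Matrix.diagonal_apply_eq, Function.comp] using h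
    · simpa [Matrix.diagonal_apply_ne _ hij, hij, Function.comp] using h
  have hDBe : ∀ i j, (lam i : ℂ) * B i j = if i = j then (lam i : ℂ) else 0 := by
    intro i j
    have h := congrFun (congrFun hDB i) j
    rw [hDdef, Matrix.diagonal_mul] at h
    by_cases hij : i = j
    · subst hij
      simpa [Matrix.diagonal_apply_eq, Function.comp] using h
    · simpa [Matrix.diagonal_apply_ne _ hij, hij, Function.comp] using h
  -- trace in eigenbasis
  have htrace : ∀ M : Matrix n n ℂ, (ρ * M).trace = (D * (Uᴴ * M * U)).trace := by
    intro M
    rw [hspec]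
    rw [show U * D * Uᴴ * M = U * (D * (Uᴴ * M)) by simp [Matrix.mul_assoc],
      trace_mul_comm, show D * (Uᴴ * M) * U = D * (Uᴴ * M * U) by simp [Matrix.mul_assoc]]
  -- linear trace equality
  have htrlin : (ρ * (P * H * P)).trace = (ρ * H).trace := by
    have e1 : ρ * (P * H * P) = ρ * H * P := by
      calc ρ * (P * H * P) = (ρ * P) * (H * P) := by simp only [Matrix.mul_assoc]
        _ = ρ * (H * P) := by rw [hρP]
        _ = ρ * H * P := by rw [Matrix.mul_assoc]
    rw [e1, trace_mul_comm, ← Matrix.mul_assoc, hPρ]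
  -- quadratic trace formula
  have hquad : ∀ Y : Matrix n n ℂ, Y.IsHermitian →
      (D * (Y * Y)).trace = ((∑ i, ∑ j, lam i * Complex.normSq (Y i j) : ℝ) : ℂ) := by
    intro Y hY
    have hYe : ∀ i j, Y j i = starRingEnd ℂ (Y i j) := by
      intro i j
      rw [← hY.apply j i]
      simp [conjTranspose_apply]
    have h1 : ∀ i, (D * (Y * Y)) i i = (lam i : ℂ) * ∑ j, Y i j * Y j i := by
      intro i
      rw [hDdef, Matrix.diagonal_mul, Matrix.mul_apply]
      simp [Function.comp]
    calc (D * (Y * Y)).trace = ∑ i, (lam i : ℂ) * ∑ j, Y i j * Y j i := by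
          simp only [Matrix.trace, Matrix.diag_apply, h1]
      _ = ∑ i, ∑ j, ((lam i * Complex.normSq (Y i j) : ℝ) : ℂ) := by
          refine Finset.sum_congr rfl fun i _ => ?_
          rw [Finset.mul_sum]
          refine Finset.sum_congr rfl fun j _ => ?_
          rw [hYe i j, Complex.mul_conj]
          push_cast
          ring
      _ = ((∑ i, ∑ j, lam i * Complex.normSq (Y i j) : ℝ) : ℂ) := by
          push_cast
          rfl
  have hQH : (ρ * H * H).trace.re = ∑ i, ∑ j, lam i * Complex.normSq (A i j) := by
    rw [Matrix.mul_assoc, htrace (H * H), ← e, ← hAdef, hquad A hAherm, Complex.ofReal_re]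
  have hQH' : (ρ * (P * H * P) * (P * H * P)).trace.re
      = ∑ i, ∑ j, lam i * Complex.normSq ((B * A * B) i j) := by
    rw [Matrix.mul_assoc, htrace ((P * H * P) * (P * H * P)), ← e, hA',
      hquad (B * A * B) hABherm, Complex.ofReal_re]
  have hlin : (ρ * (P * H * P)).trace.re = (ρ * H).trace.re := by rw [htrlin]
  rw [hQH, hQH', hlin, hA']
  have := key_combinatorial lam hnn A B hAherm hABherm hBDe hDBe
  linarith
end

section
/- For real parameters g_z, g_y and collective spin operators satisfying [S_z^K, S_y^K] = −i S_x^K for K ∈ {A, B}, every separable state σ of the bipartite system satisfies Var_σ(g_z S_z^A + S_z^B) + Var_σ(g_y S_y^A + S_y^B) − ⟨|g_z g_y| S_x^A + S_x^B⟩_σ ≥ 0. -/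
open Finset ComplexOrder Matrix Kronecker

/-- Expectation value `⟨X⟩_ρ = Tr(ρX)` (real part). -/
noncomputable def expVal {n : Type} [Fintype n] (ρ X : Matrix n n ℂ) : ℝ :=
  (ρ * X).trace.re

/-- Variance `Var_ρ(X) = ⟨X²⟩_ρ − ⟨X⟩_ρ²`. -/
noncomputable def varVal {n : Type} [Fintype n] (ρ X : Matrix n n ℂ) : ℝ :=
  expVal ρ (X * X) - (expVal ρ X) ^ 2

set_option linter.unusedSectionVars false

section Aux
variable {n : Type} [Fintype n] [DecidableEq n]

lemma trace_real (ρ X : Matrix n n ℂ) (hρ : ρ.IsHermitian) (hX : X.IsHermitian) :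
    (ρ * X).trace = ((expVal ρ X : ℝ) : ℂ) := by
  have h : (starRingEnd ℂ) (ρ * X).trace = (ρ * X).trace := by
    have := Matrix.trace_conjTranspose (ρ * X)
    rw [Matrix.conjTranspose_mul, hρ.eq, hX.eq, Matrix.trace_mul_comm] at this
    simpa using this.symm
  exact (Complex.conj_eq_iff_re.mp h).symm

lemma trace_conj_self_re (P : Matrix n n ℂ) :
    (Pᴴ * P).trace.re = ∑ j, ∑ k, Complex.normSq (P k j) := by
  simp [Matrix.trace, Matrix.mul_apply, Matrix.diag, Complex.re_sum, Matrix.conjTranspose_apply,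
    Complex.normSq_eq_conj_mul_self, Complex.normSq_apply]

lemma trace_self_nonneg (P : Matrix n n ℂ) : 0 ≤ (Pᴴ * P).trace.re := by
  rw [trace_conj_self_re]
  exact Finset.sum_nonneg fun j _ => Finset.sum_nonneg fun k _ => Complex.normSq_nonneg _

/-- Cauchy–Schwarz for the Frobenius inner product. -/
lemma cs_trace (P Q : Matrix n n ℂ) :
    ‖(Qᴴ * P).trace‖ ^ 2 ≤ (Qᴴ * Q).trace.re * (Pᴴ * P).trace.re := by
  have h1 : ‖(Qᴴ * P).trace‖
      ≤ ∑ j, ∑ k, ‖Q k j‖ * ‖P k j‖ := by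
    calc ‖(Qᴴ * P).trace‖
        = ‖∑ j, ∑ k, (starRingEnd ℂ) (Q k j) * P k j‖ := by
          simp [Matrix.trace, Matrix.mul_apply, Matrix.diag, Matrix.conjTranspose_apply]
      _ ≤ ∑ j, ∑ k, ‖(starRingEnd ℂ) (Q k j) * P k j‖ := by
          refine (norm_sum_le (E := ℂ) _ _).trans ?_
          exact Finset.sum_le_sum fun j _ => norm_sum_le (E := ℂ) _ _
      _ = ∑ j, ∑ k, ‖Q k j‖ * ‖P k j‖ := by
          simp [_root_.map_mul]
  have h2 : (∑ j, ∑ k, ‖Q k j‖ * ‖P k j‖) ^ 2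
      ≤ (∑ j, ∑ k, ‖Q k j‖ ^ 2) * (∑ j, ∑ k, ‖P k j‖ ^ 2) := by
    rw [← Finset.sum_product' (f := fun j k => ‖Q k j‖ * ‖P k j‖),
      ← Finset.sum_product' (f := fun j k => ‖Q k j‖ ^ 2),
      ← Finset.sum_product' (f := fun j k => ‖P k j‖ ^ 2)]
    exact Finset.sum_mul_sq_le_sq_mul_sq _ _ _
  calc ‖(Qᴴ * P).trace‖ ^ 2
      ≤ (∑ j, ∑ k, ‖Q k j‖ * ‖P k j‖) ^ 2 := by
        apply pow_le_pow_left₀ (by positivity) h1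
    _ ≤ (∑ j, ∑ k, ‖Q k j‖ ^ 2) * (∑ j, ∑ k, ‖P k j‖ ^ 2) := h2
    _ = (Qᴴ * Q).trace.re * (Pᴴ * P).trace.re := by
        rw [trace_conj_self_re, trace_conj_self_re]
        simp [Complex.sq_norm]


-- basic linearity of expVal
lemma expVal_add (ρ X Y : Matrix n n ℂ) : expVal ρ (X + Y) = expVal ρ X + expVal ρ Y := by
  simp [expVal, Matrix.mul_add]

lemma expVal_sub (ρ X Y : Matrix n n ℂ) : expVal ρ (X - Y) = expVal ρ X - expVal ρ Y := by
  simp [expVal, Matrix.mul_sub]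

lemma expVal_rsmul (ρ X : Matrix n n ℂ) (c : ℝ) : expVal ρ ((c : ℂ) • X) = c * expVal ρ X := by
  simp [expVal, Matrix.mul_smul, Complex.smul_re]

lemma expVal_one (ρ : Matrix n n ℂ) (h : ρ.trace = 1) : expVal ρ 1 = 1 := by
  simp [expVal, h]

-- the shifted operator A' := A - ⟨A⟩•1
lemma shifted_herm (A : Matrix n n ℂ) (hA : A.IsHermitian) (c : ℝ) :
    (A - (c : ℂ) • 1).IsHermitian := by
  rw [Matrix.IsHermitian, Matrix.conjTranspose_sub, hA.eq, Matrix.conjTranspose_smul]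
  simp

lemma expVal_shifted_sq (ρ A : Matrix n n ℂ) (hρ1 : ρ.trace = 1) :
    expVal ρ ((A - ((expVal ρ A : ℝ) : ℂ) • 1) * (A - ((expVal ρ A : ℝ) : ℂ) • 1))
      = varVal ρ A := by
  set a := expVal ρ A with ha
  have hexp : (A - (a : ℂ) • 1) * (A - (a : ℂ) • 1)
      = A * A - (a : ℂ) • A - (a : ℂ) • A + ((a * a : ℝ) : ℂ) • 1 := by
    simp only [Matrix.sub_mul, Matrix.mul_sub, smul_mul_assoc, mul_smul_comm, one_mul,
      mul_one, smul_smul]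
    push_cast
    module
  rw [hexp, expVal_add, expVal_sub, expVal_sub]
  simp only [expVal_rsmul, expVal_one ρ hρ1, varVal]
  ring

/-- Robertson uncertainty + AM–GM: the key single-system inequality. -/
lemma key_lemma (ρ A B C : Matrix n n ℂ) (hρ : IsDensity ρ)
    (hA : A.IsHermitian) (hB : B.IsHermitian) (hC : C.IsHermitian)
    (hcomm : A * B - B * A = (-Complex.I) • C) :
    |expVal ρ C| ≤ varVal ρ A + varVal ρ B := by
  open scoped MatrixOrder in
  obtain ⟨M, hM⟩ := CStarAlgebra.nonneg_iff_eq_star_mul_self.mp hρ.1.nonneg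
  rw [Matrix.star_eq_conjTranspose] at hM
  set a := expVal ρ A with hadef
  set b := expVal ρ B with hbdef
  set A' := A - (a : ℂ) • 1 with hA'def
  set B' := B - (b : ℂ) • 1 with hB'def
  have hA' : A'.IsHermitian := shifted_herm A hA a
  have hB' : B'.IsHermitian := shifted_herm B hB b
  set P := M * A' with hPdef
  set Q := M * B' with hQdef
  have tr_id : ∀ (X Y : Matrix n n ℂ), Y.IsHermitian →
      (ρ * (X * Y)).trace = ((M * Y)ᴴ * (M * X)).trace := by
    intro X Y hY
    rw [hM]
    calc (Mᴴ * M * (X * Y)).trace = ((M * (X * Y)) * Mᴴ).trace := by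
          rw [Matrix.mul_assoc Mᴴ, Matrix.trace_mul_comm]
      _ = ((M * X) * (Y * Mᴴ)).trace := by
          simp only [Matrix.mul_assoc]
      _ = ((M * X) * (M * Y)ᴴ).trace := by rw [Matrix.conjTranspose_mul, hY.eq]
      _ = ((M * Y)ᴴ * (M * X)).trace := Matrix.trace_mul_comm _ _
  have vA_eq : varVal ρ A = (Pᴴ * P).trace.re := by
    rw [← expVal_shifted_sq ρ A hρ.2, expVal, ← hadef, ← hA'def, tr_id A' A' hA', hPdef]
  have vB_eq : varVal ρ B = (Qᴴ * Q).trace.re := by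
    rw [← expVal_shifted_sq ρ B hρ.2, expVal, ← hbdef, ← hB'def, tr_id B' B' hB', hQdef]
  have hvA : 0 ≤ varVal ρ A := vA_eq ▸ trace_self_nonneg P
  have hvB : 0 ≤ varVal ρ B := vB_eq ▸ trace_self_nonneg Q
  set c := ((Qᴴ : Matrix n n ℂ) * P).trace with hcdef
  have hc : (ρ * (A' * B')).trace = c := tr_id A' B' hB'
  have hconj : (starRingEnd ℂ) c = (ρ * (B' * A')).trace := by
    rw [← hc, ← Complex.star_def, ← Matrix.trace_conjTranspose, Matrix.conjTranspose_mul, Matrix.conjTranspose_mul,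
      hA'.eq, hB'.eq, hρ.1.isHermitian.eq, Matrix.trace_mul_comm]
  set x := expVal ρ C with hxdef
  have hAB : A' * B' - B' * A' = (-Complex.I) • C := by
    have h : A' * B' - B' * A' = A * B - B * A := by
      rw [hA'def, hB'def]
      simp only [Matrix.sub_mul, Matrix.mul_sub, smul_mul_assoc, mul_smul_comm, one_mul,
        mul_one, smul_smul]
      module
    rw [h, hcomm]
  have hsub : c - (starRingEnd ℂ) c = -(Complex.I * (x : ℂ)) := by
    rw [hconj, ← hc, ← Matrix.trace_sub, ← Matrix.mul_sub, hAB]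
    rw [mul_smul_comm, Matrix.trace_smul, trace_real ρ C hρ.1.isHermitian hC]
    simp [hxdef]
  have him : 2 * c.im = -x := by
    have h1 : c - (starRingEnd ℂ) c = ((2 * c.im : ℝ) : ℂ) * Complex.I := by
      rw [Complex.sub_conj]
      try push_cast
      try ring
    have h2 : ((2 * c.im : ℝ) : ℂ) * Complex.I = ((-x : ℝ) : ℂ) * Complex.I := by
      rw [← h1, hsub]; push_cast; ring
    have h3 := mul_right_cancel₀ Complex.I_ne_zero h2
    exact_mod_cast h3
  have hcs : ‖c‖ ^ 2 ≤ varVal ρ B * varVal ρ A := by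
    rw [vA_eq, vB_eq]; exact cs_trace P Q
  have habs : |c.im| ≤ ‖c‖ := Complex.abs_im_le_norm c
  have hxabs : |x| = 2 * |c.im| := by
    have : x = -(2 * c.im) := by linarith
    rw [this, abs_neg, abs_mul]; norm_num
  rw [hxabs]
  nlinarith [sq_nonneg (varVal ρ A - varVal ρ B), norm_nonneg c, abs_nonneg c.im,
    sq_abs c.im, hcs, habs, hvA, hvB]

section Kron
variable {m : Type} [Fintype m] [DecidableEq m]

lemma herm_mul_self (A : Matrix n n ℂ) (hA : A.IsHermitian) : (A * A).IsHermitian := by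
  rw [Matrix.IsHermitian, Matrix.conjTranspose_mul, hA.eq]

lemma expVal_kron (dA : Matrix n n ℂ) (dB : Matrix m m ℂ) (MA : Matrix n n ℂ)
    (MB : Matrix m m ℂ) (hdA : dA.IsHermitian) (hdB : dB.IsHermitian)
    (hMA : MA.IsHermitian) (hMB : MB.IsHermitian) :
    expVal (dA ⊗ₖ dB) (MA ⊗ₖ MB) = expVal dA MA * expVal dB MB := by
  unfold expVal
  rw [← Matrix.mul_kronecker_mul, Matrix.trace_kronecker,
    trace_real dA MA hdA hMA, trace_real dB MB hdB hMB]
  simp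

lemma prod_expVal (dA : Matrix n n ℂ) (dB : Matrix m m ℂ) (MA : Matrix n n ℂ)
    (MB : Matrix m m ℂ) (hdA : IsDensity dA) (hdB : IsDensity dB)
    (hMA : MA.IsHermitian) (hMB : MB.IsHermitian) :
    expVal (dA ⊗ₖ dB) (MA ⊗ₖ (1 : Matrix m m ℂ) + (1 : Matrix n n ℂ) ⊗ₖ MB)
      = expVal dA MA + expVal dB MB := by
  rw [expVal_add,
    expVal_kron dA dB MA 1 hdA.1.isHermitian hdB.1.isHermitian hMA Matrix.isHermitian_one,
    expVal_kron dA dB 1 MB hdA.1.isHermitian hdB.1.isHermitian Matrix.isHermitian_one hMB,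
    expVal_one dB hdB.2, expVal_one dA hdA.2]
  ring

lemma prod_varVal (dA : Matrix n n ℂ) (dB : Matrix m m ℂ) (MA : Matrix n n ℂ)
    (MB : Matrix m m ℂ) (hdA : IsDensity dA) (hdB : IsDensity dB)
    (hMA : MA.IsHermitian) (hMB : MB.IsHermitian) :
    varVal (dA ⊗ₖ dB) (MA ⊗ₖ (1 : Matrix m m ℂ) + (1 : Matrix n n ℂ) ⊗ₖ MB)
      = varVal dA MA + varVal dB MB := by
  have hsq : (MA ⊗ₖ (1 : Matrix m m ℂ) + (1 : Matrix n n ℂ) ⊗ₖ MB)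
        * (MA ⊗ₖ (1 : Matrix m m ℂ) + (1 : Matrix n n ℂ) ⊗ₖ MB)
      = (MA * MA) ⊗ₖ (1 : Matrix m m ℂ) + (MA ⊗ₖ MB)
        + ((MA ⊗ₖ MB) + (1 : Matrix n n ℂ) ⊗ₖ (MB * MB)) := by
    simp only [Matrix.add_mul, Matrix.mul_add, ← Matrix.mul_kronecker_mul, one_mul, mul_one]
    try abel
  unfold varVal
  rw [hsq, expVal_add, expVal_add, expVal_add,
    expVal_kron dA dB (MA*MA) 1 hdA.1.isHermitian hdB.1.isHermitian (herm_mul_self MA hMA)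
      Matrix.isHermitian_one,
    expVal_kron dA dB MA MB hdA.1.isHermitian hdB.1.isHermitian hMA hMB,
    expVal_kron dA dB 1 (MB*MB) hdA.1.isHermitian hdB.1.isHermitian Matrix.isHermitian_one
      (herm_mul_self MB hMB),
    expVal_one dB hdB.2, expVal_one dA hdA.2,
    prod_expVal dA dB MA MB hdA hdB hMA hMB]
  ring

end Kron

lemma expVal_mixture {r : ℕ} (p : Fin r → ℝ) (ρi : Fin r → Matrix n n ℂ) (X : Matrix n n ℂ) :
    expVal (∑ i, (p i : ℂ) • ρi i) X = ∑ i, p i * expVal (ρi i) X := by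
  simp [expVal, Finset.sum_mul, Matrix.smul_mul, Matrix.trace_sum, Matrix.trace_smul,
    Complex.re_sum, Complex.smul_re]

lemma var_mixture {r : ℕ} (p : Fin r → ℝ) (hp : ∀ i, 0 ≤ p i) (hp1 : ∑ i, p i = 1)
    (ρi : Fin r → Matrix n n ℂ) (X : Matrix n n ℂ) :
    ∑ i, p i * varVal (ρi i) X ≤ varVal (∑ i, (p i : ℂ) • ρi i) X := by
  unfold varVal
  rw [expVal_mixture p ρi X, expVal_mixture p ρi (X * X)]
  have hcs : (∑ i, p i * expVal (ρi i) X) ^ 2 ≤ ∑ i, p i * (expVal (ρi i) X) ^ 2 := by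
    have h := Finset.sum_mul_sq_le_sq_mul_sq Finset.univ (fun i => Real.sqrt (p i))
      (fun i => Real.sqrt (p i) * expVal (ρi i) X)
    have e1 : ∀ i : Fin r, Real.sqrt (p i) * (Real.sqrt (p i) * expVal (ρi i) X)
        = p i * expVal (ρi i) X := fun i => by
      rw [← mul_assoc, Real.mul_self_sqrt (hp i)]
    have e2 : ∀ i : Fin r, Real.sqrt (p i) ^ 2 = p i := fun i => Real.sq_sqrt (hp i)
    have e3 : ∀ i : Fin r, (Real.sqrt (p i) * expVal (ρi i) X) ^ 2
        = p i * (expVal (ρi i) X) ^ 2 := fun i => by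
      rw [mul_pow, e2]
    simp only [e1, e2, e3, hp1, one_mul] at h
    exact h
  have hexp : ∑ i, p i * (expVal (ρi i) (X * X) - (expVal (ρi i) X) ^ 2)
      = (∑ i, p i * expVal (ρi i) (X * X)) - ∑ i, p i * (expVal (ρi i) X) ^ 2 := by
    rw [← Finset.sum_sub_distrib]
    congr 1; ext i; ring
  rw [hexp]
  linarith

lemma herm_rsmul (c : ℝ) (A : Matrix n n ℂ) (hA : A.IsHermitian) :
    ((c : ℂ) • A).IsHermitian := by
  rw [Matrix.IsHermitian, Matrix.conjTranspose_smul, hA.eq]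
  simp

lemma scaled_comm (Sz Sy Sx : Matrix n n ℂ) (hcomm : Sz * Sy - Sy * Sz = (-Complex.I) • Sx)
    (gz gy : ℝ) :
    ((gz : ℂ) • Sz) * ((gy : ℂ) • Sy) - ((gy : ℂ) • Sy) * ((gz : ℂ) • Sz)
      = (-Complex.I) • (((gz * gy : ℝ) : ℂ) • Sx) := by
  have h1 : ((gz : ℂ) • Sz) * ((gy : ℂ) • Sy) - ((gy : ℂ) • Sy) * ((gz : ℂ) • Sz)
      = ((gz : ℂ) * (gy : ℂ)) • (Sz * Sy - Sy * Sz) := by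
    simp only [smul_mul_assoc, mul_smul_comm, smul_smul, smul_sub]
    module
  rw [h1, hcomm, smul_smul, smul_smul]
  push_cast
  ring_nf

end Aux

/-- for collective spin operators with `[S_z^K, S_y^K] = −i S_x^K`,
every separable state `σ` of the bipartite system satisfies
`Var(g_z S_z^A + S_z^B) + Var(g_y S_y^A + S_y^B) − ⟨|g_z g_y| S_x^A + S_x^B⟩ ≥ 0`. -/
theorem stmt12 {a b : Type} [Fintype a] [DecidableEq a] [Fintype b] [DecidableEq b]
    (SxA SyA SzA : Matrix a a ℂ) (SxB SyB SzB : Matrix b b ℂ)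
    (hxA : SxA.IsHermitian) (hyA : SyA.IsHermitian) (hzA : SzA.IsHermitian)
    (hxB : SxB.IsHermitian) (hyB : SyB.IsHermitian) (hzB : SzB.IsHermitian)
    (hcommA : SzA * SyA - SyA * SzA = (-Complex.I) • SxA)
    (hcommB : SzB * SyB - SyB * SzB = (-Complex.I) • SxB)
    (gz gy : ℝ)
    (σ : Matrix (a × b) (a × b) ℂ)
    (hsep : ∃ (r : ℕ) (p : Fin r → ℝ) (ρA : Fin r → Matrix a a ℂ)
        (ρB : Fin r → Matrix b b ℂ),
      (∀ i, 0 ≤ p i) ∧ (∑ i, p i = 1) ∧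
      (∀ i, IsDensity (ρA i)) ∧ (∀ i, IsDensity (ρB i)) ∧
      σ = ∑ i, (p i : ℂ) • (ρA i ⊗ₖ ρB i)) :
    0 ≤ varVal σ (((gz : ℂ) • SzA) ⊗ₖ (1 : Matrix b b ℂ) + (1 : Matrix a a ℂ) ⊗ₖ SzB)
        + varVal σ (((gy : ℂ) • SyA) ⊗ₖ (1 : Matrix b b ℂ) + (1 : Matrix a a ℂ) ⊗ₖ SyB)
        - expVal σ (((|gz * gy| : ℝ) : ℂ) • SxA ⊗ₖ (1 : Matrix b b ℂ)
            + (1 : Matrix a a ℂ) ⊗ₖ SxB) := by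
  obtain ⟨r, p, ρA, ρB, hp, hp1, hdA, hdB, hσ⟩ := hsep
  set MzA : Matrix a a ℂ := (gz : ℂ) • SzA with hMzA
  set MyA : Matrix a a ℂ := (gy : ℂ) • SyA with hMyA
  have hMzAh : MzA.IsHermitian := herm_rsmul gz SzA hzA
  have hMyAh : MyA.IsHermitian := herm_rsmul gy SyA hyA
  set Z := MzA ⊗ₖ (1 : Matrix b b ℂ) + (1 : Matrix a a ℂ) ⊗ₖ SzB with hZ
  set Y := MyA ⊗ₖ (1 : Matrix b b ℂ) + (1 : Matrix a a ℂ) ⊗ₖ SyB with hY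
  set X := ((|gz * gy| : ℝ) : ℂ) • SxA ⊗ₖ (1 : Matrix b b ℂ) + (1 : Matrix a a ℂ) ⊗ₖ SxB
    with hX
  have hpt : ∀ i, expVal (ρA i ⊗ₖ ρB i) X
      ≤ varVal (ρA i ⊗ₖ ρB i) Z + varVal (ρA i ⊗ₖ ρB i) Y := by
    intro i
    have hkeyA := key_lemma (ρA i) MzA MyA (((gz * gy : ℝ) : ℂ) • SxA) (hdA i)
      hMzAh hMyAh (herm_rsmul _ SxA hxA) (scaled_comm SzA SyA SxA hcommA gz gy)
    have hkeyB := key_lemma (ρB i) SzB SyB SxB (hdB i) hzB hyB hxB hcommB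
    rw [expVal_rsmul] at hkeyA
    have hXval : expVal (ρA i ⊗ₖ ρB i) X
        = |gz * gy| * expVal (ρA i) SxA + expVal (ρB i) SxB := by
      rw [hX, expVal_add, expVal_rsmul,
        expVal_kron (ρA i) (ρB i) SxA 1 (hdA i).1.isHermitian (hdB i).1.isHermitian hxA
          Matrix.isHermitian_one,
        expVal_kron (ρA i) (ρB i) 1 SxB (hdA i).1.isHermitian (hdB i).1.isHermitian
          Matrix.isHermitian_one hxB,
        expVal_one (ρB i) (hdB i).2, expVal_one (ρA i) (hdA i).2]
      ring
    have hZval := prod_varVal (ρA i) (ρB i) MzA SzB (hdA i) (hdB i) hMzAh hzB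
    have hYval := prod_varVal (ρA i) (ρB i) MyA SyB (hdA i) (hdB i) hMyAh hyB
    rw [hXval, hZ, hY, hZval, hYval]
    have h1 : |gz * gy| * expVal (ρA i) SxA ≤ |(gz * gy) * expVal (ρA i) SxA| := by
      rw [abs_mul (gz * gy) (expVal (ρA i) SxA)]
      exact mul_le_mul_of_nonneg_left (le_abs_self (expVal (ρA i) SxA)) (abs_nonneg (gz * gy))
    have h2 : expVal (ρB i) SxB ≤ |expVal (ρB i) SxB| := le_abs_self _
    linarith
  rw [hσ, expVal_mixture p (fun i => ρA i ⊗ₖ ρB i) X]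
  have hZm := var_mixture p hp hp1 (fun i => ρA i ⊗ₖ ρB i) Z
  have hYm := var_mixture p hp hp1 (fun i => ρA i ⊗ₖ ρB i) Y
  have hsum : ∑ i, p i * expVal (ρA i ⊗ₖ ρB i) X
      ≤ ∑ i, p i * varVal (ρA i ⊗ₖ ρB i) Z + ∑ i, p i * varVal (ρA i ⊗ₖ ρB i) Y := by
    rw [← Finset.sum_add_distrib]
    refine Finset.sum_le_sum fun i _ => ?_
    have h : p i * expVal (ρA i ⊗ₖ ρB i) X
        ≤ p i * (varVal (ρA i ⊗ₖ ρB i) Z + varVal (ρA i ⊗ₖ ρB i) Y) :=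
      mul_le_mul_of_nonneg_left (hpt i) (hp i)
    nlinarith [h]
  linarith
end

section
/- Let W be a Hermitian operator with eigenvalues contained in [W⁻, W⁺] where W⁻ < 0 < W⁺, and such that Tr[Wσ] ≥ 0 for every separable state σ. Then the trace-distance to the separable set satisfies min_{σ separable} (1/2)‖ρ − σ‖₁ ≥ −Tr[Wρ]/(W⁺ − W⁻) for every state ρ. -/
open Finset ComplexOrder Matrix Kronecker

/-- Separable states of a bipartite system. -/
def IsSep {a b : Type} [Fintype a] [Fintype b]
    (σ : Matrix (a × b) (a × b) ℂ) : Prop :=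
  ∃ (r : ℕ) (p : Fin r → ℝ) (ρA : Fin r → Matrix a a ℂ) (ρB : Fin r → Matrix b b ℂ),
    (∀ i, 0 ≤ p i) ∧ (∑ i, p i = 1) ∧
    (∀ i, IsDensity (ρA i)) ∧ (∀ i, IsDensity (ρB i)) ∧
    σ = ∑ i, (p i : ℂ) • (ρA i ⊗ₖ ρB i)

/-- The trace norm of a Hermitian matrix: the sum of the absolute values of its
eigenvalues (junk value `0` on non-Hermitian input). -/
noncomputable def trNorm {n : Type} [Fintype n] [DecidableEq n]
    (A : Matrix n n ℂ) : ℝ :=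
  if h : A.IsHermitian then ∑ i, |h.eigenvalues i| else 0

lemma kron_conjT {a b : Type} [Fintype a] [Fintype b]
    (A : Matrix a a ℂ) (B : Matrix b b ℂ) : (A ⊗ₖ B)ᴴ = Aᴴ ⊗ₖ Bᴴ := by
  ext ⟨i,j⟩ ⟨k,l⟩
  simp [conjTranspose_apply, Matrix.kroneckerMap_apply, star_mul', mul_comm]

/-- If all eigenvalues of the Hermitian matrix `W` are at least `c`,
then `W - c • 1` is positive semidefinite. -/
lemma psd_shift {n : Type} [Fintype n] [DecidableEq n] {W : Matrix n n ℂ}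
    (hW : W.IsHermitian) (c : ℝ) (h : ∀ i, c ≤ hW.eigenvalues i) :
    (W - (c:ℂ) • 1).PosSemidef := by
  have h1 : W - (c:ℂ) • 1 =
      (hW.eigenvectorUnitary : Matrix n n ℂ) *
        (diagonal (fun i => ((hW.eigenvalues i : ℂ) - c)) ) *
        (star (hW.eigenvectorUnitary : Matrix n n ℂ)) := by
    have hu : (hW.eigenvectorUnitary : Matrix n n ℂ) *
        (star (hW.eigenvectorUnitary : Matrix n n ℂ)) = 1 :=
      Matrix.mem_unitaryGroup_iff.mp hW.eigenvectorUnitary.2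
    calc W - (c:ℂ) • 1
        = (hW.eigenvectorUnitary : Matrix n n ℂ) * diagonal (RCLike.ofReal ∘ hW.eigenvalues)
          * (star (hW.eigenvectorUnitary : Matrix n n ℂ))
          - (hW.eigenvectorUnitary : Matrix n n ℂ) * ((c:ℂ) • 1)
          * (star (hW.eigenvectorUnitary : Matrix n n ℂ)) := by
          conv_lhs => rw [hW.spectral_theorem]
          simp only [Unitary.conjStarAlgAut_apply]; congr 1
          rw [Matrix.mul_smul, Matrix.mul_one, Matrix.smul_mul, hu]
      _ = _ := by
          rw [← Matrix.sub_mul, ← Matrix.mul_sub]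
          congr 2
          rw [Matrix.smul_one_eq_diagonal, ← Matrix.diagonal_sub]
          rfl
  rw [h1]
  refine (Matrix.posSemidef_diagonal_iff.mpr ?_).mul_mul_conjTranspose_same _
  intro i
  rw [← Complex.ofReal_sub]
  exact_mod_cast sub_nonneg.mpr (h i)

/-- If all eigenvalues of the Hermitian matrix `W` are at most `c`,
then `c • 1 - W` is positive semidefinite. -/
lemma psd_shift' {n : Type} [Fintype n] [DecidableEq n] {W : Matrix n n ℂ}
    (hW : W.IsHermitian) (c : ℝ) (h : ∀ i, hW.eigenvalues i ≤ c) :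
    ((c:ℂ) • 1 - W).PosSemidef := by
  have h1 : (c:ℂ) • 1 - W =
      (hW.eigenvectorUnitary : Matrix n n ℂ) *
        (diagonal (fun i => ((c : ℂ) - hW.eigenvalues i)) ) *
        (star (hW.eigenvectorUnitary : Matrix n n ℂ)) := by
    have hu : (hW.eigenvectorUnitary : Matrix n n ℂ) *
        (star (hW.eigenvectorUnitary : Matrix n n ℂ)) = 1 :=
      Matrix.mem_unitaryGroup_iff.mp hW.eigenvectorUnitary.2
    calc (c:ℂ) • 1 - W
        = (hW.eigenvectorUnitary : Matrix n n ℂ) * ((c:ℂ) • 1)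
          * (star (hW.eigenvectorUnitary : Matrix n n ℂ))
          - (hW.eigenvectorUnitary : Matrix n n ℂ) * diagonal (RCLike.ofReal ∘ hW.eigenvalues)
          * (star (hW.eigenvectorUnitary : Matrix n n ℂ)) := by
          conv_lhs => rw [hW.spectral_theorem]
          simp only [Unitary.conjStarAlgAut_apply]; congr 1
          rw [Matrix.mul_smul, Matrix.mul_one, Matrix.smul_mul, hu]
      _ = _ := by
          rw [← Matrix.sub_mul, ← Matrix.mul_sub]
          congr 2
          rw [Matrix.smul_one_eq_diagonal, ← Matrix.diagonal_sub]
          rfl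
  rw [h1]
  refine (Matrix.posSemidef_diagonal_iff.mpr ?_).mul_mul_conjTranspose_same _
  intro i
  rw [← Complex.ofReal_sub]
  exact_mod_cast sub_nonneg.mpr (h i)

/-- Diagonal entry of a conjugated matrix as a quadratic form. -/
lemma diag_entry_eq {n : Type} [Fintype n]
    (P U : Matrix n n ℂ) (i : n) :
    (star U * P * U) i i = star (fun k => U k i) ⬝ᵥ (P *ᵥ fun k => U k i) := by
  simp only [Matrix.mul_apply, Matrix.mulVec, dotProduct, Matrix.star_apply,
    Matrix.conjTranspose_apply, Finset.sum_mul, Finset.mul_sum, Pi.star_apply]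
  rw [Finset.sum_comm]
  refine Finset.sum_congr rfl fun k _ => Finset.sum_congr rfl fun j _ => by ring

/-- for a Hermitian entanglement witness `W` with spectrum in `[W⁻, W⁺]`,
`W⁻ < 0 < W⁺`, and `Tr[Wσ] ≥ 0` on all separable states, the trace distance from any
state `ρ` to the separable set is at least `−Tr[Wρ]/(W⁺ − W⁻)`. -/
theorem stmt13 {a b : Type} [Fintype a] [DecidableEq a] [Fintype b] [DecidableEq b]
    (W : Matrix (a × b) (a × b) ℂ) (hW : W.IsHermitian)
    (Wm Wp : ℝ) (hWm : Wm < 0) (hWp : 0 < Wp)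
    (hspec : ∀ i, hW.eigenvalues i ∈ Set.Icc Wm Wp)
    (hwitness : ∀ σ : Matrix (a × b) (a × b) ℂ, IsSep σ → 0 ≤ (W * σ).trace.re)
    (ρ : Matrix (a × b) (a × b) ℂ) (hρ : IsDensity ρ) :
    ∀ σ : Matrix (a × b) (a × b) ℂ, IsSep σ →
      -((W * ρ).trace.re) / (Wp - Wm) ≤ (1 / 2) * trNorm (ρ - σ) := by
  intro σ hσ
  classical
  have h0 : 0 ≤ (W * σ).trace.re := hwitness σ hσ
  obtain ⟨r, p, ρA, ρB, hp0, hp1, hA, hB, hσeq⟩ := hσ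
  -- σ is Hermitian with trace one
  have hσherm : σ.IsHermitian := by
    show σᴴ = σ
    rw [hσeq, Matrix.conjTranspose_sum]
    refine Finset.sum_congr rfl fun i _ => ?_
    rw [Matrix.conjTranspose_smul, kron_conjT, (hA i).1.1, (hB i).1.1]
    simp
  have hσtr : σ.trace = 1 := by
    rw [hσeq, Matrix.trace_sum]
    have : ∀ i ∈ Finset.univ, ((p i : ℂ) • (ρA i ⊗ₖ ρB i)).trace = (p i : ℂ) := by
      intro i _
      rw [Matrix.trace_smul, Matrix.trace_kronecker, (hA i).2, (hB i).2]
      simp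
    rw [Finset.sum_congr rfl this]
    rw [← Complex.ofReal_sum]
    exact_mod_cast congrArg (Complex.ofReal) hp1
  set Δ := ρ - σ with hΔdef
  have hΔ : Δ.IsHermitian := hρ.1.1.sub hσherm
  set U := (hΔ.eigenvectorUnitary : Matrix (a × b) (a × b) ℂ) with hUdef
  set ε := hΔ.eigenvalues with hεdef
  have hspecΔ : Δ = U * diagonal (RCLike.ofReal ∘ ε) * star U := hΔ.spectral_theorem
  have hUU : star U * U = 1 :=
    Matrix.mem_unitaryGroup_iff'.mp hΔ.eigenvectorUnitary.2
  have htr : trNorm Δ = ∑ i, |ε i| := by rw [trNorm, dif_pos hΔ]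
  -- sum of eigenvalues is zero
  have hsum0 : ∑ i, ε i = 0 := by
    have h1 : Δ.trace = ∑ i, (ε i : ℂ) := by
      calc Δ.trace = (U * diagonal (RCLike.ofReal ∘ ε) * star U).trace := by rw [← hspecΔ]
        _ = (star U * U * diagonal (RCLike.ofReal ∘ ε)).trace := by
            rw [Matrix.trace_mul_cycle]
        _ = (diagonal (RCLike.ofReal ∘ ε)).trace := by rw [hUU, Matrix.one_mul]
        _ = ∑ i, (ε i : ℂ) := by rw [Matrix.trace_diagonal]; rfl
    have h2 : Δ.trace = 0 := by
      rw [hΔdef, Matrix.trace_sub, hρ.2, hσtr, sub_self]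
    have h3 : ((∑ i, ε i : ℝ) : ℂ) = 0 := by rw [Complex.ofReal_sum]; rw [← h1, h2]
    exact_mod_cast h3
  -- diagonal entries of star U * W * U
  set w : (a × b) → ℝ := fun i => ((star U * W * U) i i).re with hwdef
  have hwb : ∀ i, Wm ≤ w i ∧ w i ≤ Wp := by
    intro i
    have hx : (star (fun k => U k i)) ⬝ᵥ (fun k => U k i) = 1 := by
      have : (star U * U) i i = 1 := by rw [hUU, Matrix.one_apply_eq]
      rw [← this]
      simp only [Matrix.mul_apply, dotProduct, Matrix.conjTranspose_apply,
        Pi.star_apply, Matrix.star_apply]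
    constructor
    · have hps := (psd_shift hW Wm fun j => (hspec j).1).dotProduct_mulVec_nonneg (fun k => U k i)
      rw [← diag_entry_eq] at hps
      have hexp : (star U * (W - (Wm:ℂ) • 1) * U) i i
          = (star U * W * U) i i - (Wm : ℂ) := by
        have : star U * (W - (Wm:ℂ) • 1) * U
            = star U * W * U - (Wm:ℂ) • (star U * U) := by
          rw [Matrix.mul_sub, Matrix.sub_mul]
          congr 1
          rw [Matrix.mul_smul, Matrix.mul_one, Matrix.smul_mul]
        rw [this, hUU]
        simp [Matrix.sub_apply, Matrix.smul_apply, Matrix.one_apply_eq]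
      rw [hexp] at hps
      have := (Complex.le_def.mp hps).1
      simp only [Complex.zero_re, Complex.sub_re, Complex.ofReal_re] at this
      linarith
    · have hps := (psd_shift' hW Wp fun j => (hspec j).2).dotProduct_mulVec_nonneg (fun k => U k i)
      rw [← diag_entry_eq] at hps
      have hexp : (star U * ((Wp:ℂ) • 1 - W) * U) i i
          = (Wp : ℂ) - (star U * W * U) i i := by
        have : star U * ((Wp:ℂ) • 1 - W) * U
            = (Wp:ℂ) • (star U * U) - star U * W * U := by
          rw [Matrix.mul_sub, Matrix.sub_mul]
          congr 1
          rw [Matrix.mul_smul, Matrix.mul_one, Matrix.smul_mul]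
        rw [this, hUU]
        simp [Matrix.sub_apply, Matrix.smul_apply, Matrix.one_apply_eq]
      rw [hexp] at hps
      have := (Complex.le_def.mp hps).1
      simp only [Complex.zero_re, Complex.sub_re, Complex.ofReal_re] at this
      linarith
  -- trace of W * Δ
  have hWΔ : (W * Δ).trace = ∑ i, (ε i : ℂ) * (star U * W * U) i i := by
    calc (W * Δ).trace
        = (W * (U * diagonal (RCLike.ofReal ∘ ε) * star U)).trace := by rw [← hspecΔ]
      _ = (star U * (W * (U * diagonal (RCLike.ofReal ∘ ε))) ).trace := by
          rw [← Matrix.mul_assoc, Matrix.trace_mul_comm]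
      _ = ((star U * W * U) * diagonal (RCLike.ofReal ∘ ε)).trace := by
          rw [Matrix.mul_assoc, Matrix.mul_assoc]
      _ = ∑ i, (star U * W * U) i i * (ε i : ℂ) := by
          simp [Matrix.trace, Matrix.mul_diagonal, Matrix.diag, Function.comp]
      _ = ∑ i, (ε i : ℂ) * (star U * W * U) i i := by
          refine Finset.sum_congr rfl fun i _ => mul_comm _ _
  have hWΔre : (W * Δ).trace.re = ∑ i, ε i * w i := by
    rw [hWΔ, Complex.re_sum]
    exact Finset.sum_congr rfl fun i _ => Complex.re_ofReal_mul _ _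
  have hlin : (W * Δ).trace.re = (W * ρ).trace.re - (W * σ).trace.re := by
    rw [hΔdef, Matrix.mul_sub, Matrix.trace_sub, Complex.sub_re]
  -- final arithmetic
  set c : ℝ := (Wp + Wm) / 2 with hcdef
  have h2 : -(W * Δ).trace.re = ∑ i, ε i * (c - w i) := by
    have e1 : ∑ i, ε i * (c - w i) = (∑ i, ε i) * c - ∑ i, ε i * w i := by
      rw [Finset.sum_mul, ← Finset.sum_sub_distrib]
      exact Finset.sum_congr rfl fun i _ => by ring
    rw [e1, hsum0, hWΔre]; ring
  have h3 : ∑ i, ε i * (c - w i) ≤ ∑ i, |ε i| * ((Wp - Wm) / 2) := by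
    refine Finset.sum_le_sum fun i _ => ?_
    have hb := hwb i
    have habs : |c - w i| ≤ (Wp - Wm) / 2 := by
      rw [abs_le]; constructor <;> [linarith [hb.2]; linarith [hb.1]]
    calc ε i * (c - w i) ≤ |ε i * (c - w i)| := le_abs_self _
      _ = |ε i| * |c - w i| := abs_mul _ _
      _ ≤ |ε i| * ((Wp - Wm) / 2) := by
          exact mul_le_mul_of_nonneg_left habs (abs_nonneg _)
  have key : -(W * ρ).trace.re ≤ (Wp - Wm) * ((1/2) * ∑ i, |ε i|) := by
    have h4 : ∑ i, |ε i| * ((Wp - Wm) / 2) = (Wp - Wm) * ((1/2) * ∑ i, |ε i|) := by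
      rw [← Finset.sum_mul]; ring
    have h1 : -(W * ρ).trace.re ≤ -(W * Δ).trace.re := by linarith
    linarith [h2 ▸ (h4 ▸ h3), h1]
  rw [htr, div_le_iff₀ (by linarith : (0:ℝ) < Wp - Wm)]
  calc -(W * ρ).trace.re ≤ (Wp - Wm) * ((1/2) * ∑ i, |ε i|) := key
    _ = (1 / 2 * ∑ i, |ε i|) * (Wp - Wm) := by ring
end

section
/- The multimode Fock state |n⟩ = |n₀,…,n_{m−1}⟩ of N = Σ_i n_i bosons has first-quantized expansion |n⟩• = C(N; n)^{−1/2} Σ_{n_A: Σ_i n_{Ai} = N_A, n_{Ai} ≤ n_i} C(N_A; n_A)^{1/2} C(N−N_A; n−n_A)^{1/2} |n_A⟩•_{N_A} ⊗ |n−n_A⟩•_{N−N_A} when the N particles are partitioned into groups of N_A and N−N_A, where C(N; n) denotes the multinomial coefficient N!/(n₀!⋯n_{m−1}!). -/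
open Finset

/-- The occupation numbers of a multi-index `f : Fin N → Fin m`:
`occ f i` is the number of tensor factors in single-particle state `i`. -/
def occ {N m : ℕ} (f : Fin N → Fin m) : Fin m → ℕ :=
  fun i => (Finset.univ.filter (fun k => f k = i)).card

/-- The first-quantized (symmetrized, normalized) Fock state `|n⟩•` of occupation
vector `n`, as a function on multi-indices:
`|n⟩•(f) = C(N;n)^{−1/2}` if `occ f = n` and `0` otherwise, where `C(N;n)` is the
multinomial coefficient. -/
noncomputable def fockFQ (N m : ℕ) (n : Fin m → ℕ) : (Fin N → Fin m) → ℂ :=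
  fun f => if occ f = n then
    ((Real.sqrt (((Nat.multinomial Finset.univ n : ℕ) : ℝ))⁻¹ : ℝ) : ℂ)
  else 0

lemma occ_sum {N m : ℕ} (f : Fin N → Fin m) : ∑ i, occ f i = N := by
  simp only [occ, Finset.card_filter]
  rw [Finset.sum_comm]
  simp

lemma occ_split {m NA NB : ℕ} (f : Fin (NA + NB) → Fin m) (i : Fin m) :
    occ f i = occ (fun k => f (Fin.castAdd NB k)) i + occ (fun k => f (Fin.natAdd NA k)) i := by
  simp only [occ, Finset.card_filter]
  rw [Fin.sum_univ_add]

lemma sqrt_mult_ne {m : ℕ} (n : Fin m → ℕ) :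
    (((Real.sqrt (((Nat.multinomial Finset.univ n : ℕ) : ℝ)) : ℝ) : ℂ)) ≠ 0 := by
  have h : 0 < (Nat.multinomial Finset.univ n : ℝ) := by
    exact_mod_cast Nat.multinomial_pos _ _
  have h2 : Real.sqrt ((Nat.multinomial Finset.univ n : ℕ) : ℝ) ≠ 0 :=
    (Real.sqrt_pos.mpr h).ne'
  exact_mod_cast Complex.ofReal_ne_zero.mpr h2

/-- splitting the `N = N_A + N_B` particles of the Fock state `|n⟩•` into
the first `N_A` and the remaining `N_B` tensor factors gives the expansion
`|n⟩• = C(N;n)^{−1/2} Σ_{n_A ≤ n, Σn_A = N_A} C(N_A;n_A)^{1/2} C(N_B;n−n_A)^{1/2}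
|n_A⟩• ⊗ |n−n_A⟩•`. -/
theorem stmt19 (m NA NB : ℕ) (n : Fin m → ℕ) (hn : ∑ i, n i = NA + NB) :
    ∀ f : Fin (NA + NB) → Fin m,
      fockFQ (NA + NB) m n f
        = ((Real.sqrt (((Nat.multinomial Finset.univ n : ℕ) : ℝ))⁻¹ : ℝ) : ℂ) *
          ∑ d : (∀ i : Fin m, Fin (n i + 1)),
            if (∑ i, ((d i : ℕ))) = NA then
              ((Real.sqrt ((Nat.multinomial Finset.univ (fun i => (d i : ℕ)) : ℕ) : ℝ) : ℝ) : ℂ) *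
              ((Real.sqrt ((Nat.multinomial Finset.univ (fun i => n i - (d i : ℕ)) : ℕ) : ℝ) : ℝ) : ℂ) *
              fockFQ NA m (fun i => (d i : ℕ)) (fun k => f (Fin.castAdd NB k)) *
              fockFQ NB m (fun i => n i - (d i : ℕ)) (fun k => f (Fin.natAdd NA k))
            else 0 := by
  intro f
  set gA : Fin NA → Fin m := fun k => f (Fin.castAdd NB k) with hgA
  set gB : Fin NB → Fin m := fun k => f (Fin.natAdd NA k) with hgB
  by_cases h : occ f = n
  · -- the sum has a single nonzero term, equal to 1
    have hle : ∀ i, occ gA i ≤ n i := fun i => by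
      rw [← h, occ_split f i]; exact Nat.le_add_right _ _
    set d0 : ∀ i : Fin m, Fin (n i + 1) := fun i => ⟨occ gA i, Nat.lt_succ_of_le (hle i)⟩ with hd0
    have hsum1 : (∑ d : (∀ i : Fin m, Fin (n i + 1)),
        if (∑ i, ((d i : ℕ))) = NA then
          ((Real.sqrt ((Nat.multinomial Finset.univ (fun i => (d i : ℕ)) : ℕ) : ℝ) : ℝ) : ℂ) *
          ((Real.sqrt ((Nat.multinomial Finset.univ (fun i => n i - (d i : ℕ)) : ℕ) : ℝ) : ℝ) : ℂ) *
          fockFQ NA m (fun i => (d i : ℕ)) gA *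
          fockFQ NB m (fun i => n i - (d i : ℕ)) gB
        else 0) = 1 := by
      rw [Finset.sum_eq_single d0]
      · -- the d0 term equals 1
        have hA : occ gA = fun i => ((d0 i : ℕ)) := rfl
        have hB : occ gB = fun i => n i - ((d0 i : ℕ)) := by
          funext i
          have := occ_split f i
          rw [h] at this
          simp [hd0, this]
          show occ gB i = occ gA i + occ gB i - occ gA i
          omega
        have hNA : (∑ i, ((d0 i : ℕ))) = NA := by
          simp only [hd0]
          exact occ_sum gA
        rw [if_pos hNA]
        rw [fockFQ, fockFQ, if_pos hA, if_pos hB]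
        push_cast
        rw [mul_assoc, mul_comm (((Real.sqrt _ : ℝ) : ℂ)) _, ← mul_assoc, mul_assoc, mul_assoc]
        rw [← mul_assoc (((Real.sqrt ((Nat.multinomial Finset.univ (fun i => ((d0 i : ℕ))) : ℕ) : ℝ) : ℝ) : ℂ))]
        field_simp [sqrt_mult_ne]
        have e : ∀ x : ℝ, 0 < x → ((Real.sqrt x : ℝ) : ℂ) * ((Real.sqrt (1 / x) : ℝ) : ℂ) = 1 := by
          intro x hx
          rw [← Complex.ofReal_mul, ← Real.sqrt_mul hx.le, mul_one_div_cancel hx.ne', Real.sqrt_one,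
            Complex.ofReal_one]
        have eA := e _ (Nat.cast_pos.mpr (Nat.multinomial_pos univ (fun i => n i - (d0 i : ℕ))))
        have eB := e _ (Nat.cast_pos.mpr (Nat.multinomial_pos univ (fun i => (d0 i : ℕ))))
        rw [show ∀ a b c d : ℂ, a * b * c * d = (a * d) * (b * c) from fun _ _ _ _ => by ring,
          eA, eB, mul_one]
      · intro d _ hd
        rcases eq_or_ne (occ gA) (fun i => ((d i : ℕ))) with heq | hne
        · exfalso
          apply hd
          funext i
          have : (d0 i : ℕ) = (d i : ℕ) := by
            simp [hd0, ← congrFun heq i]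
          exact (Fin.ext this).symm
        · have : fockFQ NA m (fun i => ((d i : ℕ))) gA = 0 := by
            rw [fockFQ, if_neg hne]
          rw [this]
          simp
      · intro hmem
        exact absurd (Finset.mem_univ d0) hmem
    rw [hsum1, mul_one]
    rw [fockFQ, if_pos h]
  · -- LHS is 0 and every term of the sum vanishes
    rw [fockFQ, if_neg h]
    rw [Finset.sum_eq_zero, mul_zero]
    intro d _
    rcases eq_or_ne (occ gA) (fun i => ((d i : ℕ))) with heqA | hneA
    · rcases eq_or_ne (occ gB) (fun i => n i - ((d i : ℕ))) with heqB | hneB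
      · exfalso
        apply h
        funext i
        rw [occ_split f i]
        have h1 := congrFun heqA i
        have h2 := congrFun heqB i
        simp only [hgA, hgB] at h1 h2 ⊢
        rw [h1, h2]
        exact Nat.add_sub_cancel' (Fin.is_le (d i))
      · have : fockFQ NB m (fun i => n i - ((d i : ℕ))) gB = 0 := by
          rw [fockFQ, if_neg hneB]
        rw [this]
        simp
    · have : fockFQ NA m (fun i => ((d i : ℕ))) gA = 0 := by
        rw [fockFQ, if_neg hneA]
      rw [this]
      simp
end
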